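/- arXiv:1808.03328 — 7 statements merged into one kernel-verified Lean document; each statement's English description precedes it below -/
import Mathlib

section
/- For t ∈ {0,...,T-1}, the value C_t := esssup over stopping times τ ∈ S_{t+1,T+1} of E^Q_t[ Σ_{s=t+1}^{τ-1} (R_{s-1} - R_s - X_s) ] (with C_T := 0) satisfies the backward recursion C_t = E^Q_t[ (R_t - X_{t+1} - V_{t+1})_+ ], where V_t := R_t - C_t for t < T and V_T := 0. -/
open MeasureTheory Finset

namespace Stmt1Aux

variable {Ω : Type*} {m0 : MeasurableSpace Ω} (μ : Measure Ω) [IsProbabilityMeasure μ]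
  (ℱ : Filtration ℕ m0) (T : ℕ) (g : ℕ → Ω → ℝ)

/-- The dynamic programming value function, defined by backward recursion, indexed by
`k = T - t`. -/
noncomputable def Wk : ℕ → Ω → ℝ
  | 0 => fun _ => 0
  | k + 1 => μ[fun ω => max (g (T - k) ω + Wk k ω) 0 | ℱ (T - k - 1)]

/-- The dynamic programming value function at time `t`. -/
noncomputable def W (t : ℕ) : Ω → ℝ := Wk μ ℱ T g (T - t)

lemma W_ge {t : ℕ} (h : T ≤ t) : W μ ℱ T g t = fun _ => 0 := by
  unfold W
  rw [Nat.sub_eq_zero_of_le h]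
  rfl

lemma W_succ {t : ℕ} (h : t < T) :
    W μ ℱ T g t = μ[fun ω => max (g (t + 1) ω + W μ ℱ T g (t + 1) ω) 0 | ℱ t] := by
  have h1 : T - t = (T - (t + 1)) + 1 := by omega
  have h2 : T - (T - (t + 1)) = t + 1 := by omega
  unfold W
  rw [h1]
  show Wk μ ℱ T g (T - (t + 1) + 1) = _
  rw [Wk, h2]
  norm_num

lemma W_int (t : ℕ) : Integrable (W μ ℱ T g t) μ := by
  by_cases h : T ≤ t
  · rw [W_ge μ ℱ T g h]
    exact integrable_const 0
  · rw [W_succ μ ℱ T g (by omega)]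
    exact integrable_condExp

lemma W_sm (t : ℕ) : StronglyMeasurable[ℱ t] (W μ ℱ T g t) := by
  by_cases h : T ≤ t
  · rw [W_ge μ ℱ T g h]
    exact stronglyMeasurable_const
  · rw [W_succ μ ℱ T g (by omega)]
    exact stronglyMeasurable_condExp

lemma stN {τ : Ω → ℕ} (hτ : IsStoppingTime ℱ (fun ω => (τ ω : WithTop ℕ))) (n : ℕ) :
    MeasurableSet[ℱ n] {ω | τ ω ≤ n} := by
  have := hτ n
  simpa using this

lemma ofN {τ : Ω → ℕ} (h : ∀ n, MeasurableSet[ℱ n] {ω | τ ω ≤ n}) :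
    IsStoppingTime ℱ (fun ω => (τ ω : WithTop ℕ)) := by
  intro n
  simpa using h n

/-- The cumulative payoff for the stopping time `τ` starting at time `t`. -/
def S (τ : Ω → ℕ) (t : ℕ) : Ω → ℝ := fun ω => ∑ s ∈ Finset.Icc (t + 1) (τ ω - 1), g s ω

lemma S_int {τ : Ω → ℕ} (hg : ∀ s, Integrable (g s) μ) (hτ : IsStoppingTime ℱ (fun ω => (τ ω : WithTop ℕ)))
    {t : ℕ} (hhi : ∀ ω, τ ω ≤ T + 1) (hlo : ∀ ω, t + 1 ≤ τ ω) :
    Integrable (S g τ t) μ := by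
  have heq : S g τ t = fun ω => ∑ s ∈ Finset.Icc (t + 1) (T + 1),
      ({ω' | τ ω' ≤ s}ᶜ).indicator (g s) ω := by
    funext ω
    unfold S
    have : Finset.Icc (t + 1) (τ ω - 1)
        = (Finset.Icc (t + 1) (T + 1)).filter (fun s => ¬ τ ω ≤ s) := by
      ext x
      simp only [Finset.mem_Icc, Finset.mem_filter, not_le]
      have h1 := hhi ω
      have h2 := hlo ω
      omega
    rw [this, Finset.sum_filter]
    congr 1
    funext s
    by_cases h : τ ω ≤ s <;>
      simp [Set.indicator_apply, Set.mem_compl_iff, Set.mem_setOf_eq, h]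
  rw [heq]
  apply integrable_finset_sum
  intro s _
  exact (hg s).indicator ((ℱ.le s _ (stN ℱ hτ s)).compl)

lemma S_decomp (t : ℕ) (τ τ' : Ω → ℕ) (hlo : ∀ ω, t + 1 ≤ τ ω)
    (h' : ∀ ω, t + 2 ≤ τ ω → τ' ω = τ ω) :
    S g τ t = ({ω | t + 2 ≤ τ ω}).indicator
      (fun ω => g (t + 1) ω + S g τ' (t + 1) ω) := by
  funext ω
  by_cases h : t + 2 ≤ τ ω
  · rw [Set.indicator_of_mem (show ω ∈ {ω | t + 2 ≤ τ ω} from h)]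
    unfold S
    rw [h' ω h]
    have hins : Finset.Icc (t + 1) (τ ω - 1)
        = insert (t + 1) (Finset.Icc (t + 2) (τ ω - 1)) := by
      ext x
      simp only [Finset.mem_Icc, Finset.mem_insert]
      omega
    rw [hins, Finset.sum_insert (by simp [Finset.mem_Icc])]
  · rw [Set.indicator_of_notMem (show ω ∉ {ω | t + 2 ≤ τ ω} from h)]
    unfold S
    rw [Finset.Icc_eq_empty (by have := hlo ω; omega), Finset.sum_empty]

lemma condexp_step (hg : ∀ s, Integrable (g s) μ)
    (hgsm : ∀ s, StronglyMeasurable[ℱ s] (g s)) (t : ℕ) (B : Set Ω)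
    (hB : MeasurableSet[ℱ (t + 1)] B) (f : Ω → ℝ) (hf : Integrable f μ) :
    μ[B.indicator (fun ω => g (t + 1) ω + f ω) | ℱ t]
      =ᵐ[μ] μ[B.indicator (fun ω => g (t + 1) ω + (μ[f | ℱ (t + 1)]) ω) | ℱ t] := by
  have hY : Integrable (fun ω => g (t + 1) ω + f ω) μ := (hg (t + 1)).add hf
  have h1 : μ[μ[B.indicator (fun ω => g (t + 1) ω + f ω) | ℱ (t + 1)] | ℱ t]
      =ᵐ[μ] μ[B.indicator (fun ω => g (t + 1) ω + f ω) | ℱ t] :=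
    condExp_condExp_of_le (ℱ.mono (Nat.le_succ t)) (ℱ.le (t + 1))
  have h2 : μ[B.indicator (fun ω => g (t + 1) ω + f ω) | ℱ (t + 1)]
      =ᵐ[μ] B.indicator (μ[fun ω => g (t + 1) ω + f ω | ℱ (t + 1)]) :=
    condExp_indicator hY hB
  have h3 : μ[fun ω => g (t + 1) ω + f ω | ℱ (t + 1)]
      =ᵐ[μ] fun ω => g (t + 1) ω + (μ[f | ℱ (t + 1)]) ω := by
    refine (condExp_add (hg (t + 1)) hf (ℱ (t + 1))).trans ?_
    rw [condExp_of_stronglyMeasurable (ℱ.le (t + 1)) (hgsm (t + 1)) (hg (t + 1))]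
    rfl
  calc μ[B.indicator (fun ω => g (t + 1) ω + f ω) | ℱ t]
      =ᵐ[μ] μ[μ[B.indicator (fun ω => g (t + 1) ω + f ω) | ℱ (t + 1)] | ℱ t] := h1.symm
    _ =ᵐ[μ] μ[B.indicator (fun ω => g (t + 1) ω + (μ[f | ℱ (t + 1)]) ω) | ℱ t] :=
        condExp_congr_ae (h2.trans (h3.indicator))

lemma key (hg : ∀ s, Integrable (g s) μ) (hgsm : ∀ s, StronglyMeasurable[ℱ s] (g s)) :
    ∀ d t, T = t + d →
      ((∀ τ : Ω → ℕ, IsStoppingTime ℱ (fun ω => (τ ω : WithTop ℕ)) → (∀ ω, τ ω ∈ Set.Icc (t + 1) (T + 1)) →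
          μ[S g τ t | ℱ t] ≤ᵐ[μ] W μ ℱ T g t) ∧
       (∃ τ : Ω → ℕ, IsStoppingTime ℱ (fun ω => (τ ω : WithTop ℕ)) ∧ (∀ ω, τ ω ∈ Set.Icc (t + 1) (T + 1)) ∧
          μ[S g τ t | ℱ t] =ᵐ[μ] W μ ℱ T g t)) := by
  intro d
  induction d with
  | zero =>
    intro t ht
    obtain rfl : t = T := by omega
    have hW : W μ ℱ t g t = fun _ => 0 := W_ge μ ℱ t g le_rfl
    have hS : ∀ τ : Ω → ℕ, (∀ ω, τ ω ∈ Set.Icc (t + 1) (t + 1)) →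
        S g τ t = fun _ => (0 : ℝ) := by
      intro τ hmem
      funext ω
      have hτω : τ ω = t + 1 := le_antisymm (hmem ω).2 (hmem ω).1
      unfold S
      rw [hτω, Finset.Icc_eq_empty (by omega), Finset.sum_empty]
    have hzero : μ[(fun _ : Ω => (0:ℝ)) | ℱ t] = fun _ => (0:ℝ) := by
      rw [show (fun _ : Ω => (0:ℝ)) = (0 : Ω → ℝ) from rfl, condExp_zero]
    constructor
    · intro τ hτ hmem
      rw [hS τ hmem, hW, hzero]
    · refine ⟨fun _ => t + 1, isStoppingTime_const ℱ (t + 1), fun ω => by simp, ?_⟩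
      rw [hS (fun _ => t + 1) (fun ω => by simp), hW, hzero]
  | succ d ih =>
    intro t ht
    have htT : t < T := by omega
    obtain ⟨IHa, τ0, hτ0, hτ0mem, IHb⟩ := ih (t + 1) (by omega)
    have hWrec := W_succ μ ℱ T g htT
    have hintW : Integrable (fun ω => max (g (t + 1) ω + W μ ℱ T g (t + 1) ω) 0) μ :=
      ((hg (t + 1)).add (W_int μ ℱ T g (t + 1))).pos_part
    constructor
    · -- upper bound part
      intro τ hτ hmem
      set τ' : Ω → ℕ := fun ω => max (τ ω) (t + 2) with hτ'def
      have hτ'mem : ∀ ω, τ' ω ∈ Set.Icc (t + 2) (T + 1) := by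
        intro ω
        refine ⟨le_max_right _ _, max_le (hmem ω).2 (by omega)⟩
      have hτ' : IsStoppingTime ℱ (fun ω => (τ' ω : WithTop ℕ)) := by
        refine ofN ℱ ?_
        intro n
        by_cases hn : t + 2 ≤ n
        · have : {ω | τ' ω ≤ n} = {ω | τ ω ≤ n} := by
            ext ω
            simp only [Set.mem_setOf_eq, hτ'def, max_le_iff]
            omega
          rw [this]
          exact stN ℱ hτ n
        · have : {ω | τ' ω ≤ n} = ∅ := by
            ext ω
            simp only [Set.mem_setOf_eq, Set.mem_empty_iff_false, iff_false, not_le]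
            exact lt_of_lt_of_le (by omega) (le_max_right (τ ω) (t + 2))
          rw [this]
          exact @MeasurableSet.empty _ (ℱ n)
      have hdecomp := S_decomp g t τ τ' (fun ω => (hmem ω).1)
        (fun ω h => max_eq_left h)
      have hB : MeasurableSet[ℱ (t + 1)] {ω | t + 2 ≤ τ ω} := by
        have : {ω | t + 2 ≤ τ ω} = {ω | τ ω ≤ t + 1}ᶜ := by
          ext ω; simp only [Set.mem_setOf_eq, Set.mem_compl_iff, not_le]; omega
        rw [this]
        exact (stN ℱ hτ (t + 1)).compl
      have hfint : Integrable (S g τ' (t + 1)) μ :=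
        S_int μ ℱ T g hg hτ' (fun ω => (hτ'mem ω).2) (fun ω => (hτ'mem ω).1)
      have hstep := condexp_step μ ℱ g hg hgsm t {ω | t + 2 ≤ τ ω} hB
        (S g τ' (t + 1)) hfint
      have hub := IHa τ' hτ' hτ'mem
      have hle : ({ω | t + 2 ≤ τ ω}).indicator
          (fun ω => g (t + 1) ω + (μ[S g τ' (t + 1) | ℱ (t + 1)]) ω)
          ≤ᵐ[μ] fun ω => max (g (t + 1) ω + W μ ℱ T g (t + 1) ω) 0 := by
        filter_upwards [hub] with ω hω
        by_cases hωB : ω ∈ {ω | t + 2 ≤ τ ω}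
        · rw [Set.indicator_of_mem hωB]
          exact le_trans (by linarith) (le_max_left (g (t + 1) ω + W μ ℱ T g (t + 1) ω) 0)
        · rw [Set.indicator_of_notMem hωB]
          exact le_max_right _ _
      have hint1 : Integrable (({ω | t + 2 ≤ τ ω}).indicator
          (fun ω => g (t + 1) ω + (μ[S g τ' (t + 1) | ℱ (t + 1)]) ω)) μ :=
        ((hg (t + 1)).add integrable_condExp).indicator (ℱ.le (t + 1) _ hB)
      calc μ[S g τ t | ℱ t]
          =ᵐ[μ] μ[({ω | t + 2 ≤ τ ω}).indicator
              (fun ω => g (t + 1) ω + (μ[S g τ' (t + 1) | ℱ (t + 1)]) ω) | ℱ t] := by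
            rw [hdecomp]; exact hstep
        _ ≤ᵐ[μ] μ[(fun ω => max (g (t + 1) ω + W μ ℱ T g (t + 1) ω) 0) | ℱ t] :=
            condExp_mono hint1 hintW hle
        _ =ᵐ[μ] W μ ℱ T g t := by rw [hWrec]
    · -- attainment part
      set A : Set Ω := {ω | 0 ≤ g (t + 1) ω + W μ ℱ T g (t + 1) ω} with hAdef
      have hA : MeasurableSet[ℱ (t + 1)] A := by
        have hm : Measurable[ℱ (t + 1)]
            (fun ω => g (t + 1) ω + W μ ℱ T g (t + 1) ω) :=
          ((hgsm (t + 1)).add (W_sm μ ℱ T g (t + 1))).measurable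
        exact measurableSet_le measurable_const hm
      set τ : Ω → ℕ := fun ω => if 0 ≤ g (t + 1) ω + W μ ℱ T g (t + 1) ω
        then τ0 ω else t + 1 with hτdef
      have hτmem : ∀ ω, τ ω ∈ Set.Icc (t + 1) (T + 1) := by
        intro ω
        rw [hτdef]
        dsimp only
        split_ifs with h
        · exact ⟨by have := (hτ0mem ω).1; omega, (hτ0mem ω).2⟩
        · exact ⟨le_rfl, by omega⟩
      have hτ : IsStoppingTime ℱ (fun ω => (τ ω : WithTop ℕ)) := by
        refine ofN ℱ ?_
        intro n
        by_cases hn : t + 1 ≤ n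
        · have : {ω | τ ω ≤ n} = (A ∩ {ω | τ0 ω ≤ n}) ∪ Aᶜ := by
            ext ω
            by_cases h : ω ∈ A
            · have h' : 0 ≤ g (t + 1) ω + W μ ℱ T g (t + 1) ω := h
              simp only [Set.mem_setOf_eq, Set.mem_union, Set.mem_inter_iff,
                Set.mem_compl_iff, hτdef]
              rw [if_pos h']
              tauto
            · have h' : ¬ 0 ≤ g (t + 1) ω + W μ ℱ T g (t + 1) ω := h
              simp only [Set.mem_setOf_eq, Set.mem_union, Set.mem_inter_iff,
                Set.mem_compl_iff, hτdef]
              rw [if_neg h']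
              tauto
          rw [this]
          exact ((ℱ.mono hn _ hA).inter (stN ℱ hτ0 n)).union (ℱ.mono hn _ hA).compl
        · have : {ω | τ ω ≤ n} = ∅ := by
            ext ω
            simp only [Set.mem_setOf_eq, Set.mem_empty_iff_false, iff_false, not_le,
              hτdef]
            split_ifs with h
            · have := (hτ0mem ω).1; omega
            · omega
          rw [this]
          exact @MeasurableSet.empty _ (ℱ n)
      have hBA : {ω | t + 2 ≤ τ ω} = A := by
        ext ω
        by_cases h : ω ∈ A
        · have h' : 0 ≤ g (t + 1) ω + W μ ℱ T g (t + 1) ω := h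
          simp only [Set.mem_setOf_eq, hτdef]
          rw [if_pos h']
          have := (hτ0mem ω).1
          simp only [h, iff_true]
          omega
        · have h' : ¬ 0 ≤ g (t + 1) ω + W μ ℱ T g (t + 1) ω := h
          simp only [Set.mem_setOf_eq, hτdef]
          rw [if_neg h']
          simp only [h, iff_false]
          omega
      have hdecomp := S_decomp g t τ τ0 (fun ω => (hτmem ω).1)
        (fun ω h => by
          rw [hτdef] at h ⊢
          dsimp only at h ⊢
          split_ifs with h' 
          · rfl
          · rw [if_neg h'] at h; omega)
      rw [hBA] at hdecomp
      have hfint : Integrable (S g τ0 (t + 1)) μ :=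
        S_int μ ℱ T g hg hτ0 (fun ω => (hτ0mem ω).2) (fun ω => (hτ0mem ω).1)
      have hstep := condexp_step μ ℱ g hg hgsm t A hA (S g τ0 (t + 1)) hfint
      have heq2 : A.indicator (fun ω => g (t + 1) ω + (μ[S g τ0 (t + 1) | ℱ (t + 1)]) ω)
          =ᵐ[μ] fun ω => max (g (t + 1) ω + W μ ℱ T g (t + 1) ω) 0 := by
        have h4 : (fun ω => g (t + 1) ω + (μ[S g τ0 (t + 1) | ℱ (t + 1)]) ω)
            =ᵐ[μ] (fun ω => g (t + 1) ω + W μ ℱ T g (t + 1) ω) := by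
          filter_upwards [IHb] with ω hω
          rw [hω]
        refine (h4.indicator (s := A)).trans ?_
        apply Filter.EventuallyEq.of_eq
        funext ω
        by_cases h : ω ∈ A
        · rw [Set.indicator_of_mem h]
          exact (max_eq_left h).symm
        · rw [Set.indicator_of_notMem h]
          have : g (t + 1) ω + W μ ℱ T g (t + 1) ω < 0 := by
            by_contra hc
            exact h (not_lt.mp hc)
          exact (max_eq_right this.le).symm
      refine ⟨τ, hτ, hτmem, ?_⟩
      calc μ[S g τ t | ℱ t]
          =ᵐ[μ] μ[A.indicator
              (fun ω => g (t + 1) ω + (μ[S g τ0 (t + 1) | ℱ (t + 1)]) ω) | ℱ t] := by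
            rw [hdecomp]; exact hstep
        _ =ᵐ[μ] μ[(fun ω => max (g (t + 1) ω + W μ ℱ T g (t + 1) ω) 0) | ℱ t] :=
            condExp_congr_ae heq2
        _ =ᵐ[μ] W μ ℱ T g t := by rw [hWrec]

end Stmt1Aux

/-- The value `C_t`, defined as the essential supremum over stopping times
`τ ∈ S_{t+1,T+1}` of `E^Q_t[Σ_{s=t+1}^{τ-1} (R_{s-1} - R_s - X_s)]` (here characterized
as the a.e.-least a.e.-upper bound of this family), with `C_T = 0`, satisfies the
backward recursion `C_t = E^Q_t[(R_t - X_{t+1} - V_{t+1})_+]` where `V_t := R_t - C_t`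
for `t < T` and `V_T := 0`. -/
theorem stmt_1 {Ω : Type*} {m0 : MeasurableSpace Ω} (μ : Measure Ω) [IsProbabilityMeasure μ]
    (ℱ : Filtration ℕ m0) (T : ℕ) (X R C V : ℕ → Ω → ℝ)
    (hXint : ∀ t, Integrable (X t) μ) (hXadapted : ∀ t, StronglyMeasurable[ℱ t] (X t))
    (hRint : ∀ t, Integrable (R t) μ) (hRadapted : ∀ t, StronglyMeasurable[ℱ t] (R t))
    (hRT : R T = 0)
    -- C_t is an a.e. upper bound of the family of conditional expected stopped payoffs:
    (hCub : ∀ t < T, ∀ τ : Ω → ℕ, IsStoppingTime ℱ (fun ω => (τ ω : WithTop ℕ)) →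
      (∀ ω, τ ω ∈ Set.Icc (t + 1) (T + 1)) →
      μ[fun ω => ∑ s ∈ Finset.Icc (t + 1) (τ ω - 1),
          (R (s - 1) ω - R s ω - X s ω) | ℱ t] ≤ᵐ[μ] C t)
    -- and it is a.e. less than or equal to any other a.e. upper bound:
    (hClub : ∀ t < T, ∀ U : Ω → ℝ,
      (∀ τ : Ω → ℕ, IsStoppingTime ℱ (fun ω => (τ ω : WithTop ℕ)) → (∀ ω, τ ω ∈ Set.Icc (t + 1) (T + 1)) →
        μ[fun ω => ∑ s ∈ Finset.Icc (t + 1) (τ ω - 1),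
            (R (s - 1) ω - R s ω - X s ω) | ℱ t] ≤ᵐ[μ] U) →
      C t ≤ᵐ[μ] U)
    (hCT : C T = 0)
    (hV : ∀ t < T, V t = fun ω => R t ω - C t ω) (hVT : V T = 0) :
    ∀ t < T, C t =ᵐ[μ]
      μ[fun ω => max (R t ω - X (t + 1) ω - V (t + 1) ω) 0 | ℱ t] := by
  classical
  set g : ℕ → Ω → ℝ := fun s ω => R (s - 1) ω - R s ω - X s ω with hgdef
  have hg : ∀ s, Integrable (g s) μ := fun s =>
    ((hRint (s - 1)).sub (hRint s)).sub (hXint s)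
  have hgsm : ∀ s, StronglyMeasurable[ℱ s] (g s) := fun s =>
    (((hRadapted (s - 1)).mono (ℱ.mono (Nat.sub_le s 1))).sub (hRadapted s)).sub
      (hXadapted s)
  have hCW : ∀ u, u < T → C u =ᵐ[μ] Stmt1Aux.W μ ℱ T g u := by
    intro u hu
    obtain ⟨ha, τ0, h1, h2, h3⟩ := Stmt1Aux.key μ ℱ T g hg hgsm (T - u) u (by omega)
    have le1 : C u ≤ᵐ[μ] Stmt1Aux.W μ ℱ T g u :=
      hClub u hu _ (fun τ hτ hm => ha τ hτ hm)
    have le2 : Stmt1Aux.W μ ℱ T g u ≤ᵐ[μ] C u :=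
      h3.symm.le.trans (hCub u hu τ0 h1 h2)
    exact le1.antisymm le2
  intro t ht
  refine (hCW t ht).trans ?_
  rw [Stmt1Aux.W_succ μ ℱ T g ht]
  apply condExp_congr_ae
  by_cases h : t + 1 < T
  · have hc := hCW (t + 1) h
    rw [hV (t + 1) h]
    filter_upwards [hc] with ω hω
    have hg1 : g (t + 1) ω = R t ω - R (t + 1) ω - X (t + 1) ω := by
      rw [hgdef]
      simp
    rw [hg1]
    congr 1
    rw [← hω]
    ring
  · have hT1 : t + 1 = T := by omega
    have hW0 : Stmt1Aux.W μ ℱ T g (t + 1) = fun _ => 0 := Stmt1Aux.W_ge μ ℱ T g (by omega)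
    apply Filter.EventuallyEq.of_eq
    funext ω
    have hg1 : g (t + 1) ω = R t ω - R (t + 1) ω - X (t + 1) ω := by
      rw [hgdef]; simp
    have hR0 : R (t + 1) ω = 0 := by rw [hT1, hRT]; rfl
    have hV0 : V (t + 1) ω = 0 := by rw [hT1, hVT]; rfl
    rw [hW0, hg1, hR0, hV0]
    ring_nf
end

section
/- For t ∈ {0,...,T-1}, the value V_t := essinf over stopping times τ ∈ S_{t+1,T+1} of E^Q_t[ Σ_{s=t+1}^{τ-1} X_s + R_{τ-1} ] (with V_T := 0) satisfies the backward recursion V_t = R_t - E^Q_t[ (R_t - X_{t+1} - V_{t+1})_+ ]. -/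
open MeasureTheory Finset

namespace Stmt2Aux

variable {Ω : Type*} {m0 : MeasurableSpace Ω}

/-- payoff of stopping at `τ`, seen from time `t` -/
def payoff (X R : ℕ → Ω → ℝ) (t : ℕ) (τ : Ω → ℕ) : Ω → ℝ :=
  fun ω => (∑ s ∈ Finset.Icc (t + 1) (τ ω - 1), X s ω) + R (τ ω - 1) ω

noncomputable def auxV (μ : Measure Ω) (ℱ : Filtration ℕ m0) (T : ℕ) (X R : ℕ → Ω → ℝ) :
    ℕ → Ω → ℝ
  | 0 => 0
  | (k + 1) =>
      μ[fun ω => min (R (T - (k + 1)) ω) (X (T - k) ω + auxV μ ℱ T X R k ω) | ℱ (T - (k + 1))]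

noncomputable def Vt (μ : Measure Ω) (ℱ : Filtration ℕ m0) (T : ℕ) (X R : ℕ → Ω → ℝ)
    (t : ℕ) : Ω → ℝ :=
  if T ≤ t then 0 else auxV μ ℱ T X R (T - t)

lemma auxV_eq_Vt (μ : Measure Ω) (ℱ : Filtration ℕ m0) (T : ℕ) (X R : ℕ → Ω → ℝ)
    {s : ℕ} (hs : s ≤ T) : auxV μ ℱ T X R (T - s) = Vt μ ℱ T X R s := by
  by_cases h : T ≤ s
  · have h0 : T - s = 0 := by omega
    rw [h0, Vt, if_pos h]; rfl
  · rw [Vt, if_neg h]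

lemma auxV_sm (μ : Measure Ω) (ℱ : Filtration ℕ m0) (T : ℕ) (X R : ℕ → Ω → ℝ) (k : ℕ) :
    StronglyMeasurable[ℱ (T - k)] (auxV μ ℱ T X R k) := by
  cases k with
  | zero => exact stronglyMeasurable_zero
  | succ k => exact stronglyMeasurable_condExp

lemma Vt_rec (μ : Measure Ω) (ℱ : Filtration ℕ m0) (T : ℕ) (X R : ℕ → Ω → ℝ)
    {t : ℕ} (ht : t < T) :
    Vt μ ℱ T X R t
      = μ[fun ω => min (R t ω) (X (t + 1) ω + Vt μ ℱ T X R (t + 1) ω) | ℱ t] := by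
  have h1 : T - t = (T - (t + 1)) + 1 := by omega
  have h2 : T - ((T - (t + 1)) + 1) = t := by omega
  have h3 : T - (T - (t + 1)) = t + 1 := by omega
  rw [Vt, if_neg (by omega), h1, auxV, h2, h3, auxV_eq_Vt μ ℱ T X R (by omega : t + 1 ≤ T)]

lemma Vt_sm (μ : Measure Ω) (ℱ : Filtration ℕ m0) (T : ℕ) (X R : ℕ → Ω → ℝ) (t : ℕ) :
    StronglyMeasurable[ℱ t] (Vt μ ℱ T X R t) := by
  by_cases h : T ≤ t
  · rw [Vt, if_pos h]; exact stronglyMeasurable_zero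
  · rw [Vt_rec μ ℱ T X R (by omega)]; exact stronglyMeasurable_condExp

lemma Vt_int (μ : Measure Ω) (ℱ : Filtration ℕ m0) (T : ℕ) (X R : ℕ → Ω → ℝ) (t : ℕ) :
    Integrable (Vt μ ℱ T X R t) μ := by
  by_cases h : T ≤ t
  · rw [Vt, if_pos h]; exact integrable_zero _ _ _
  · rw [Vt_rec μ ℱ T X R (by omega)]; exact integrable_condExp

lemma Vt_top (μ : Measure Ω) (ℱ : Filtration ℕ m0) (T : ℕ) (X R : ℕ → Ω → ℝ) :
    Vt μ ℱ T X R T = 0 := by rw [Vt, if_pos le_rfl]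

lemma payoff_split (X R : ℕ → Ω → ℝ) (t : ℕ) (τ : Ω → ℕ)
    (hτ1 : ∀ ω, t + 1 ≤ τ ω) (ω : Ω) :
    payoff X R t τ ω
      = if τ ω = t + 1 then R t ω else X (t + 1) ω + payoff X R (t + 1) τ ω := by
  by_cases h : τ ω = t + 1
  · simp [payoff, h]
  · have h2 : t + 2 ≤ τ ω := by have := hτ1 ω; omega
    rw [if_neg h]
    show (∑ s ∈ Finset.Icc (t + 1) (τ ω - 1), X s ω) + R (τ ω - 1) ω = _
    have hins : Finset.Icc (t + 1) (τ ω - 1) = insert (t + 1) (Finset.Icc (t + 2) (τ ω - 1)) := by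
      ext x; simp only [Finset.mem_Icc, Finset.mem_insert]; omega
    rw [hins, Finset.sum_insert (by simp [Finset.mem_Icc])]
    show X (t + 1) ω + (∑ s ∈ Finset.Icc (t + 2) (τ ω - 1), X s ω) + R (τ ω - 1) ω
        = X (t + 1) ω + ((∑ s ∈ Finset.Icc (t + 1 + 1) (τ ω - 1), X s ω) + R (τ ω - 1) ω)
    ring

lemma payoff_eq_sum (X R : ℕ → Ω → ℝ) (t b : ℕ) (τ : Ω → ℕ)
    (hτ : ∀ ω, τ ω ∈ Set.Icc (t + 1) b) :
    payoff X R t τ = fun ω => ∑ n ∈ Finset.Icc (t + 1) b,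
      Set.indicator {ω' | τ ω' = n}
        (fun ω' => (∑ s ∈ Finset.Icc (t + 1) (n - 1), X s ω') + R (n - 1) ω') ω := by
  funext ω
  simp only [Set.indicator_apply, Set.mem_setOf_eq]
  rw [Finset.sum_ite_eq, if_pos (by simpa [Finset.mem_Icc, Set.mem_Icc] using hτ ω)]
  rfl

lemma st_iff (ℱ : Filtration ℕ m0) (σ : Ω → ℕ) :
    IsStoppingTime ℱ (fun ω => (σ ω : WithTop ℕ)) ↔ ∀ n : ℕ, MeasurableSet[ℱ n] {ω | σ ω ≤ n} := by
  unfold IsStoppingTime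
  refine forall_congr' fun n => Eq.to_iff (congrArg (@MeasurableSet Ω (ℱ n)) ?_)
  ext ω; simp

lemma st_eq {ℱ : Filtration ℕ m0} {σ : Ω → ℕ} (h : IsStoppingTime ℱ (fun ω => (σ ω : WithTop ℕ)))
    (n : ℕ) : MeasurableSet[ℱ n] {ω | σ ω = n} := by
  have e : {ω | σ ω = n} = {ω | (σ ω : WithTop ℕ) = (n : WithTop ℕ)} := by ext ω; simp
  rw [e]; exact h.measurableSet_eq n

lemma payoff_int (μ : Measure Ω) (ℱ : Filtration ℕ m0) (X R : ℕ → Ω → ℝ)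
    (hXint : ∀ s, Integrable (X s) μ) (hRint : ∀ s, Integrable (R s) μ)
    (t b : ℕ) (τ : Ω → ℕ) (hτ : IsStoppingTime ℱ (fun ω => (τ ω : WithTop ℕ)))
    (hτv : ∀ ω, τ ω ∈ Set.Icc (t + 1) b) :
    Integrable (payoff X R t τ) μ := by
  rw [payoff_eq_sum X R t b τ hτv]
  refine integrable_finset_sum _ fun n _ => Integrable.indicator ?_ ?_
  · exact (integrable_finset_sum _ fun s _ => hXint s).add (hRint (n - 1))
  · exact ℱ.le n _ (st_eq hτ n)


noncomputable def tauAux (μ : Measure Ω) (ℱ : Filtration ℕ m0) (T : ℕ) (X R : ℕ → Ω → ℝ) :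
    ℕ → Ω → ℕ
  | 0 => fun _ => T + 1
  | (k + 1) => fun ω =>
      if R (T - (k + 1)) ω ≤ X (T - k) ω + auxV μ ℱ T X R k ω then T - k
      else tauAux μ ℱ T X R k ω

noncomputable def tau (μ : Measure Ω) (ℱ : Filtration ℕ m0) (T : ℕ) (X R : ℕ → Ω → ℝ)
    (t : ℕ) : Ω → ℕ :=
  if T ≤ t then fun _ => T + 1 else tauAux μ ℱ T X R (T - t)

lemma tauAux_eq_tau (μ : Measure Ω) (ℱ : Filtration ℕ m0) (T : ℕ) (X R : ℕ → Ω → ℝ)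
    {s : ℕ} (hs : s ≤ T) : tauAux μ ℱ T X R (T - s) = tau μ ℱ T X R s := by
  by_cases h : T ≤ s
  · have h0 : T - s = 0 := by omega
    rw [h0, tau, if_pos h]; rfl
  · rw [tau, if_neg h]

lemma tau_rec (μ : Measure Ω) (ℱ : Filtration ℕ m0) (T : ℕ) (X R : ℕ → Ω → ℝ)
    {t : ℕ} (ht : t < T) :
    tau μ ℱ T X R t = fun ω =>
      if R t ω ≤ X (t + 1) ω + Vt μ ℱ T X R (t + 1) ω then t + 1
      else tau μ ℱ T X R (t + 1) ω := by
  have h1 : T - t = (T - (t + 1)) + 1 := by omega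
  have h2 : T - ((T - (t + 1)) + 1) = t := by omega
  have h3 : T - (T - (t + 1)) = t + 1 := by omega
  rw [tau, if_neg (by omega), h1, tauAux, h2, h3,
    auxV_eq_Vt μ ℱ T X R (by omega : t + 1 ≤ T),
    tauAux_eq_tau μ ℱ T X R (by omega : t + 1 ≤ T)]

lemma tauAux_mem (μ : Measure Ω) (ℱ : Filtration ℕ m0) (T : ℕ) (X R : ℕ → Ω → ℝ) :
    ∀ k, k ≤ T → ∀ ω, tauAux μ ℱ T X R k ω ∈ Set.Icc (T - k + 1) (T + 1) := by
  intro k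
  induction k with
  | zero => intro _ ω; simp [tauAux]
  | succ k ih =>
    intro hk ω
    rw [tauAux]
    dsimp only
    split_ifs with h
    · simp only [Set.mem_Icc]; omega
    · have := ih (by omega) ω
      simp only [Set.mem_Icc] at this ⊢
      omega

lemma tau_mem (μ : Measure Ω) (ℱ : Filtration ℕ m0) (T : ℕ) (X R : ℕ → Ω → ℝ)
    {t : ℕ} (ht : t ≤ T) (ω : Ω) : tau μ ℱ T X R t ω ∈ Set.Icc (t + 1) (T + 1) := by
  rw [← tauAux_eq_tau μ ℱ T X R ht]
  have := tauAux_mem μ ℱ T X R (T - t) (by omega) ω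
  simp only [Set.mem_Icc] at this ⊢
  omega

lemma tauAux_isStoppingTime (μ : Measure Ω) (ℱ : Filtration ℕ m0) (T : ℕ) (X R : ℕ → Ω → ℝ)
    (hXadapted : ∀ s, StronglyMeasurable[ℱ s] (X s))
    (hRadapted : ∀ s, StronglyMeasurable[ℱ s] (R s)) :
    ∀ k, k ≤ T → IsStoppingTime ℱ (fun ω => (tauAux μ ℱ T X R k ω : WithTop ℕ)) := by
  intro k
  induction k with
  | zero => intro _; exact isStoppingTime_const ℱ (T + 1)
  | succ k ih =>
    intro hk; rw [st_iff]; intro n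
    have hA : MeasurableSet[ℱ (T - k)]
        {ω | R (T - (k + 1)) ω ≤ X (T - k) ω + auxV μ ℱ T X R k ω} := by
      have h1 : StronglyMeasurable[ℱ (T - k)] (R (T - (k + 1))) :=
        (hRadapted _).mono (ℱ.mono (by omega))
      have h2 : StronglyMeasurable[ℱ (T - k)]
          (fun ω => X (T - k) ω + auxV μ ℱ T X R k ω) :=
        (hXadapted _).add (auxV_sm μ ℱ T X R k)
      exact measurableSet_le h1.measurable h2.measurable
    by_cases hn : T - k ≤ n
    · have hset : {ω | tauAux μ ℱ T X R (k + 1) ω ≤ n}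
          = {ω | R (T - (k + 1)) ω ≤ X (T - k) ω + auxV μ ℱ T X R k ω}
            ∪ ({ω | R (T - (k + 1)) ω ≤ X (T - k) ω + auxV μ ℱ T X R k ω}ᶜ
              ∩ {ω | tauAux μ ℱ T X R k ω ≤ n}) := by
        ext ω
        simp only [tauAux, Set.mem_setOf_eq, Set.mem_union, Set.mem_inter_iff,
          Set.mem_compl_iff]
        split_ifs with h
        · simp [h, hn]
        · simp [h]
      rw [hset]
      exact ((ℱ.mono hn _ hA).union (((ℱ.mono hn _ hA).compl).inter ((st_iff ℱ _).1 (ih (by omega)) n)))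
    · have hset : {ω | tauAux μ ℱ T X R (k + 1) ω ≤ n} = ∅ := by
        ext ω
        simp only [Set.mem_setOf_eq, Set.mem_empty_iff_false, iff_false, not_le]
        have := tauAux_mem μ ℱ T X R (k + 1) hk ω
        simp only [Set.mem_Icc] at this
        omega
      rw [hset]
      exact @MeasurableSet.empty _ (ℱ n)

lemma tau_isStoppingTime (μ : Measure Ω) (ℱ : Filtration ℕ m0) (T : ℕ) (X R : ℕ → Ω → ℝ)
    (hXadapted : ∀ s, StronglyMeasurable[ℱ s] (X s))
    (hRadapted : ∀ s, StronglyMeasurable[ℱ s] (R s)) (t : ℕ) :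
    IsStoppingTime ℱ (fun ω => (tau μ ℱ T X R t ω : WithTop ℕ)) := by
  rw [tau]
  split_ifs with h
  · exact isStoppingTime_const ℱ (T + 1)
  · exact tauAux_isStoppingTime μ ℱ T X R hXadapted hRadapted (T - t) (by omega)


lemma ev_indicator_congr {A : Set Ω} {μ : Measure Ω} {f g : Ω → ℝ} (h : f =ᵐ[μ] g) :
    A.indicator f =ᵐ[μ] A.indicator g := h.indicator

lemma condexp_split (μ : Measure Ω) [IsProbabilityMeasure μ] (ℱ : Filtration ℕ m0)
    (X R : ℕ → Ω → ℝ)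
    (hXint : ∀ s, Integrable (X s) μ) (hRint : ∀ s, Integrable (R s) μ)
    (hXadapted : ∀ s, StronglyMeasurable[ℱ s] (X s))
    (hRadapted : ∀ s, StronglyMeasurable[ℱ s] (R s))
    (t : ℕ) (A : Set Ω) (hA : MeasurableSet[ℱ (t + 1)] A)
    (g : Ω → ℝ) (hgint : Integrable g μ) :
    μ[(fun ω => A.indicator (R t) ω
        + Aᶜ.indicator (fun ω' => X (t + 1) ω' + g ω') ω) | ℱ (t + 1)]
      =ᵐ[μ] fun ω => A.indicator (R t) ω
        + Aᶜ.indicator (fun ω' => X (t + 1) ω' + (μ[g | ℱ (t + 1)]) ω') ω := by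
  have hm : ℱ (t + 1) ≤ m0 := ℱ.le (t + 1)
  have h1 : Integrable (A.indicator (R t)) μ := (hRint t).indicator (hm _ hA)
  have hG : Integrable (fun ω' => X (t + 1) ω' + g ω') μ := (hXint (t + 1)).add hgint
  have h2 : Integrable (Aᶜ.indicator fun ω' => X (t + 1) ω' + g ω') μ :=
    hG.indicator (hm _ hA.compl)
  have hadd : μ[(fun ω => A.indicator (R t) ω
        + Aᶜ.indicator (fun ω' => X (t + 1) ω' + g ω') ω) | ℱ (t + 1)]
      =ᵐ[μ] μ[A.indicator (R t) | ℱ (t + 1)]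
        + μ[Aᶜ.indicator (fun ω' => X (t + 1) ω' + g ω') | ℱ (t + 1)] :=
    condExp_add h1 h2 _
  have hi1 : μ[A.indicator (R t) | ℱ (t + 1)] =ᵐ[μ] A.indicator (R t) := by
    refine (condExp_indicator (hRint t) hA).trans ?_
    rw [condExp_of_stronglyMeasurable hm
      ((hRadapted t).mono (ℱ.mono (Nat.le_succ t))) (hRint t)]
  have hi3 : μ[(fun ω' => X (t + 1) ω' + g ω') | ℱ (t + 1)]
      =ᵐ[μ] fun ω' => X (t + 1) ω' + (μ[g | ℱ (t + 1)]) ω' := by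
    refine (condExp_add (hXint (t + 1)) hgint _).trans ?_
    rw [condExp_of_stronglyMeasurable hm (hXadapted (t + 1)) (hXint (t + 1))]
    exact Filter.EventuallyEq.rfl
  have hi2 : μ[Aᶜ.indicator (fun ω' => X (t + 1) ω' + g ω') | ℱ (t + 1)]
      =ᵐ[μ] Aᶜ.indicator (fun ω' => X (t + 1) ω' + (μ[g | ℱ (t + 1)]) ω') :=
    (condExp_indicator hG hA.compl).trans (ev_indicator_congr hi3)
  filter_upwards [hadd, hi1, hi2] with ω e1 e2 e3
  rw [e1, Pi.add_apply, e2, e3]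


lemma Vt_lb (μ : Measure Ω) [IsProbabilityMeasure μ] (ℱ : Filtration ℕ m0) (T : ℕ)
    (X R : ℕ → Ω → ℝ)
    (hXint : ∀ s, Integrable (X s) μ) (hXadapted : ∀ s, StronglyMeasurable[ℱ s] (X s))
    (hRint : ∀ s, Integrable (R s) μ) (hRadapted : ∀ s, StronglyMeasurable[ℱ s] (R s))
    (hRT : R T = 0) :
    ∀ k t, t ≤ T → T - t ≤ k → ∀ τ : Ω → ℕ, IsStoppingTime ℱ (fun ω => (τ ω : WithTop ℕ)) →
      (∀ ω, τ ω ∈ Set.Icc (t + 1) (T + 1)) →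
      Vt μ ℱ T X R t ≤ᵐ[μ] μ[payoff X R t τ | ℱ t] := by
  have top : ∀ τ : Ω → ℕ, (∀ ω, τ ω ∈ Set.Icc (T + 1) (T + 1)) →
      Vt μ ℱ T X R T ≤ᵐ[μ] μ[payoff X R T τ | ℱ T] := by
    intro τ hτv
    have hpay : payoff X R T τ = (fun _ => (0 : ℝ)) := by
      funext ω
      have h1 : τ ω = T + 1 := by
        have := hτv ω; simp only [Set.mem_Icc] at this; omega
      show (∑ s ∈ Finset.Icc (T + 1) (τ ω - 1), X s ω) + R (τ ω - 1) ω = 0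
      rw [h1]
      have he : Finset.Icc (T + 1) (T + 1 - 1) = ∅ := Finset.Icc_eq_empty (by omega)
      rw [he, Finset.sum_empty, Nat.add_sub_cancel, hRT]
      simp
    rw [hpay, Vt_top, show (fun _ : Ω => (0 : ℝ)) = (0 : Ω → ℝ) from rfl, condExp_zero]
  intro k
  induction k with
  | zero =>
    intro t ht hk τ hτ hτv
    have hT : t = T := by omega
    subst hT
    exact top τ hτv
  | succ k ih =>
    intro t ht hk τ hτ hτv
    by_cases htT : t = T
    · subst htT; exact top τ hτv
    have htlt : t < T := by omega
    set A := {ω | τ ω = t + 1} with hAdef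
    have hA : MeasurableSet[ℱ (t + 1)] A := st_eq hτ (t + 1)
    set τ' := fun ω => max (τ ω) (t + 2) with hτ'def
    have hτ'st : IsStoppingTime ℱ (fun ω => (τ' ω : WithTop ℕ)) := by
        refine (congrArg (IsStoppingTime ℱ) ?_).mp (hτ.max_const (t + 2))
        funext ω; exact (WithTop.coe_max (τ ω) (t + 2)).symm
    have hτ'v : ∀ ω, τ' ω ∈ Set.Icc (t + 1 + 1) (T + 1) := by
      intro ω
      have := hτv ω
      simp only [Set.mem_Icc] at this ⊢
      exact ⟨le_max_right _ _, max_le this.2 (by omega)⟩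
    have hpay'int : Integrable (payoff X R (t + 1) τ') μ :=
      payoff_int μ ℱ X R hXint hRint (t + 1) (T + 1) τ' hτ'st hτ'v
    have hIH : Vt μ ℱ T X R (t + 1) ≤ᵐ[μ] μ[payoff X R (t + 1) τ' | ℱ (t + 1)] :=
      ih (t + 1) (by omega) (by omega) τ' hτ'st hτ'v
    have hsplit : payoff X R t τ = fun ω => A.indicator (R t) ω
        + Aᶜ.indicator (fun ω' => X (t + 1) ω' + payoff X R (t + 1) τ' ω') ω := by
      funext ω
      rw [payoff_split X R t τ (fun ω' => (hτv ω').1) ω]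
      by_cases h : τ ω = t + 1
      · have hmem : ω ∈ A := h
        rw [if_pos h, Set.indicator_of_mem hmem,
          Set.indicator_of_notMem (not_not_intro hmem), add_zero]
      · have hmem : ω ∉ A := h
        have h2 : t + 2 ≤ τ ω := by have := (hτv ω).1; omega
        have hτeq : τ' ω = τ ω := max_eq_left h2
        rw [if_neg h, Set.indicator_of_notMem hmem, Set.indicator_of_mem (Set.mem_compl hmem), zero_add]
        show X (t + 1) ω + payoff X R (t + 1) τ ω = X (t + 1) ω + payoff X R (t + 1) τ' ω
        simp only [payoff, hτeq]
    have hce : μ[payoff X R t τ | ℱ (t + 1)] =ᵐ[μ] fun ω => A.indicator (R t) ω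
        + Aᶜ.indicator
          (fun ω' => X (t + 1) ω' + (μ[payoff X R (t + 1) τ' | ℱ (t + 1)]) ω') ω := by
      rw [hsplit]
      exact condexp_split μ ℱ X R hXint hRint hXadapted hRadapted t A hA _ hpay'int
    have hminle : (fun ω => min (R t ω) (X (t + 1) ω + Vt μ ℱ T X R (t + 1) ω))
        ≤ᵐ[μ] μ[payoff X R t τ | ℱ (t + 1)] := by
      filter_upwards [hce, hIH] with ω e1 e2
      rw [e1]
      by_cases hm : ω ∈ A
      · rw [Set.indicator_of_mem hm, Set.indicator_of_notMem (not_not_intro hm), add_zero]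
        exact min_le_left _ _
      · rw [Set.indicator_of_notMem hm, Set.indicator_of_mem (Set.mem_compl hm), zero_add]
        exact (min_le_right _ _).trans (by linarith)
    have hmin_int : Integrable
        (fun ω => min (R t ω) (X (t + 1) ω + Vt μ ℱ T X R (t + 1) ω)) μ :=
      ((hRint t).inf ((hXint (t + 1)).add (Vt_int μ ℱ T X R (t + 1)))).congr
        (Filter.Eventually.of_forall fun ω => rfl)
    have hmono := condExp_mono (m := ℱ t) hmin_int integrable_condExp hminle
    have htower : μ[μ[payoff X R t τ | ℱ (t + 1)] | ℱ t] =ᵐ[μ] μ[payoff X R t τ | ℱ t] :=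
      condExp_condExp_of_le (ℱ.mono (Nat.le_succ t)) (ℱ.le (t + 1))
    rw [Vt_rec μ ℱ T X R htlt]
    exact hmono.trans htower.le

lemma Vt_attained (μ : Measure Ω) [IsProbabilityMeasure μ] (ℱ : Filtration ℕ m0) (T : ℕ)
    (X R : ℕ → Ω → ℝ)
    (hXint : ∀ s, Integrable (X s) μ) (hXadapted : ∀ s, StronglyMeasurable[ℱ s] (X s))
    (hRint : ∀ s, Integrable (R s) μ) (hRadapted : ∀ s, StronglyMeasurable[ℱ s] (R s))
    (hRT : R T = 0) :
    ∀ k t, t ≤ T → T - t ≤ k →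
      μ[payoff X R t (tau μ ℱ T X R t) | ℱ t] =ᵐ[μ] Vt μ ℱ T X R t := by
  have top : μ[payoff X R T (tau μ ℱ T X R T) | ℱ T] =ᵐ[μ] Vt μ ℱ T X R T := by
    have htau : tau μ ℱ T X R T = fun _ => T + 1 := by rw [tau, if_pos le_rfl]
    have hpay : payoff X R T (tau μ ℱ T X R T) = (fun _ => (0 : ℝ)) := by
      funext ω
      show (∑ s ∈ Finset.Icc (T + 1) (tau μ ℱ T X R T ω - 1), X s ω)
          + R (tau μ ℱ T X R T ω - 1) ω = 0
      rw [htau]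
      have he : Finset.Icc (T + 1) (T + 1 - 1) = ∅ := Finset.Icc_eq_empty (by omega)
      rw [he, Finset.sum_empty, Nat.add_sub_cancel, hRT]
      simp
    rw [hpay, Vt_top, show (fun _ : Ω => (0 : ℝ)) = (0 : Ω → ℝ) from rfl, condExp_zero]
  intro k
  induction k with
  | zero =>
    intro t ht hk
    have hT : t = T := by omega
    subst hT
    exact top
  | succ k ih =>
    intro t ht hk
    by_cases htT : t = T
    · subst htT; exact top
    have htlt : t < T := by omega
    set A := {ω | R t ω ≤ X (t + 1) ω + Vt μ ℱ T X R (t + 1) ω} with hAdef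
    have hA : MeasurableSet[ℱ (t + 1)] A :=
      measurableSet_le ((hRadapted t).mono (ℱ.mono (Nat.le_succ t))).measurable
        ((hXadapted (t + 1)).add (Vt_sm μ ℱ T X R (t + 1))).measurable
    have htst : IsStoppingTime ℱ (fun ω => (tau μ ℱ T X R (t + 1) ω : WithTop ℕ)) :=
      tau_isStoppingTime μ ℱ T X R hXadapted hRadapted (t + 1)
    have htv : ∀ ω, tau μ ℱ T X R (t + 1) ω ∈ Set.Icc (t + 1 + 1) (T + 1) :=
      fun ω => tau_mem μ ℱ T X R (by omega) ω
    have hpayint : Integrable (payoff X R (t + 1) (tau μ ℱ T X R (t + 1))) μ :=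
      payoff_int μ ℱ X R hXint hRint (t + 1) (T + 1) _ htst htv
    have hIH : μ[payoff X R (t + 1) (tau μ ℱ T X R (t + 1)) | ℱ (t + 1)]
        =ᵐ[μ] Vt μ ℱ T X R (t + 1) := ih (t + 1) (by omega) (by omega)
    have htau_mem_t : ∀ ω, tau μ ℱ T X R t ω ∈ Set.Icc (t + 1) (T + 1) :=
      fun ω => tau_mem μ ℱ T X R (by omega) ω
    have hsplit : payoff X R t (tau μ ℱ T X R t) = fun ω => A.indicator (R t) ω
        + Aᶜ.indicator
          (fun ω' => X (t + 1) ω' + payoff X R (t + 1) (tau μ ℱ T X R (t + 1)) ω') ω := by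
      funext ω
      have hrec : tau μ ℱ T X R t ω
          = if R t ω ≤ X (t + 1) ω + Vt μ ℱ T X R (t + 1) ω then t + 1
            else tau μ ℱ T X R (t + 1) ω := by
        rw [tau_rec μ ℱ T X R htlt]
      rw [payoff_split X R t _ (fun ω' => (htau_mem_t ω').1) ω]
      by_cases hm : ω ∈ A
      · have h1 : tau μ ℱ T X R t ω = t + 1 := by rw [hrec, if_pos (show R t ω ≤ X (t + 1) ω + Vt μ ℱ T X R (t + 1) ω from hm)]
        rw [if_pos h1, Set.indicator_of_mem hm,
          Set.indicator_of_notMem (not_not_intro hm), add_zero]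
      · have h1 : tau μ ℱ T X R t ω = tau μ ℱ T X R (t + 1) ω := by rw [hrec, if_neg (show ¬R t ω ≤ X (t + 1) ω + Vt μ ℱ T X R (t + 1) ω from hm)]
        have h2 : tau μ ℱ T X R t ω ≠ t + 1 := by
          rw [h1]; have := (htv ω).1; omega
        rw [if_neg h2, Set.indicator_of_notMem hm, Set.indicator_of_mem (Set.mem_compl hm), zero_add]
        show X (t + 1) ω + payoff X R (t + 1) (tau μ ℱ T X R t) ω = _
        simp only [payoff, h1]
    have hce : μ[payoff X R t (tau μ ℱ T X R t) | ℱ (t + 1)] =ᵐ[μ] fun ω =>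
        A.indicator (R t) ω + Aᶜ.indicator (fun ω' => X (t + 1) ω'
          + (μ[payoff X R (t + 1) (tau μ ℱ T X R (t + 1)) | ℱ (t + 1)]) ω') ω := by
      rw [hsplit]
      exact condexp_split μ ℱ X R hXint hRint hXadapted hRadapted t A hA _ hpayint
    have hmin : μ[payoff X R t (tau μ ℱ T X R t) | ℱ (t + 1)]
        =ᵐ[μ] fun ω => min (R t ω) (X (t + 1) ω + Vt μ ℱ T X R (t + 1) ω) := by
      filter_upwards [hce, hIH] with ω e1 e2
      rw [e1]
      by_cases hm : ω ∈ A
      · rw [Set.indicator_of_mem hm, Set.indicator_of_notMem (not_not_intro hm), add_zero,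
          min_eq_left (show R t ω ≤ X (t + 1) ω + Vt μ ℱ T X R (t + 1) ω from hm)]
      · rw [Set.indicator_of_notMem hm, Set.indicator_of_mem (Set.mem_compl hm), zero_add]
        rw [e2, min_eq_right (le_of_not_ge (show ¬R t ω ≤ X (t + 1) ω + Vt μ ℱ T X R (t + 1) ω from hm))]
    have htower : μ[μ[payoff X R t (tau μ ℱ T X R t) | ℱ (t + 1)] | ℱ t]
        =ᵐ[μ] μ[payoff X R t (tau μ ℱ T X R t) | ℱ t] :=
      condExp_condExp_of_le (ℱ.mono (Nat.le_succ t)) (ℱ.le (t + 1))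
    rw [Vt_rec μ ℱ T X R htlt]
    exact htower.symm.trans (condExp_congr_ae hmin)

end Stmt2Aux

open Stmt2Aux in
/-- The value `V_t`, defined as the essential infimum over stopping times
`τ ∈ S_{t+1,T+1}` of `E^Q_t[Σ_{s=t+1}^{τ-1} X_s + R_{τ-1}]` (here characterized as the
a.e.-greatest a.e.-lower bound of this family), with `V_T = 0`, satisfies the backward
recursion `V_t = R_t - E^Q_t[(R_t - X_{t+1} - V_{t+1})_+]`. -/
theorem stmt_2 {Ω : Type*} {m0 : MeasurableSpace Ω} (μ : Measure Ω) [IsProbabilityMeasure μ]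
    (ℱ : Filtration ℕ m0) (T : ℕ) (X R V : ℕ → Ω → ℝ)
    (hXint : ∀ t, Integrable (X t) μ) (hXadapted : ∀ t, StronglyMeasurable[ℱ t] (X t))
    (hRint : ∀ t, Integrable (R t) μ) (hRadapted : ∀ t, StronglyMeasurable[ℱ t] (R t))
    (hRT : R T = 0)
    -- V_t is an a.e. lower bound of the family of conditional expected stopped payoffs:
    (hVlb : ∀ t < T, ∀ τ : Ω → ℕ, IsStoppingTime ℱ (fun ω => (τ ω : WithTop ℕ)) →
      (∀ ω, τ ω ∈ Set.Icc (t + 1) (T + 1)) →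
      V t ≤ᵐ[μ] μ[fun ω => (∑ s ∈ Finset.Icc (t + 1) (τ ω - 1), X s ω)
          + R (τ ω - 1) ω | ℱ t])
    -- and it is a.e. greater than or equal to any other a.e. lower bound:
    (hVglb : ∀ t < T, ∀ U : Ω → ℝ,
      (∀ τ : Ω → ℕ, IsStoppingTime ℱ (fun ω => (τ ω : WithTop ℕ)) → (∀ ω, τ ω ∈ Set.Icc (t + 1) (T + 1)) →
        U ≤ᵐ[μ] μ[fun ω => (∑ s ∈ Finset.Icc (t + 1) (τ ω - 1), X s ω)
            + R (τ ω - 1) ω | ℱ t]) →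
      U ≤ᵐ[μ] V t)
    (hVT : V T = 0) :
    ∀ t < T, V t =ᵐ[μ]
      fun ω => R t ω - (μ[fun ω' => max (R t ω' - X (t + 1) ω' - V (t + 1) ω') 0 | ℱ t]) ω := by
  have hVeq : ∀ s, s ≤ T → V s =ᵐ[μ] Vt μ ℱ T X R s := by
    intro s hs
    rcases eq_or_lt_of_le hs with heq | hlt
    · subst heq; rw [hVT, Vt_top]
    · have h1 : Vt μ ℱ T X R s ≤ᵐ[μ] V s :=
        hVglb s hlt _ (fun τ hτ hτv =>
          Vt_lb μ ℱ T X R hXint hXadapted hRint hRadapted hRT (T - s) s (by omega) le_rfl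
            τ hτ hτv)
      have h2 : V s ≤ᵐ[μ] Vt μ ℱ T X R s :=
        (hVlb s hlt _ (tau_isStoppingTime μ ℱ T X R hXadapted hRadapted s)
            (fun ω => tau_mem μ ℱ T X R hlt.le ω)).trans
          (Vt_attained μ ℱ T X R hXint hXadapted hRint hRadapted hRT (T - s) s (by omega)
            le_rfl).le
      exact h2.antisymm h1
  intro t ht
  have hmain : Vt μ ℱ T X R t =ᵐ[μ]
      fun ω => R t ω - (μ[fun ω' => max (R t ω' - X (t + 1) ω' - V (t + 1) ω') 0 | ℱ t]) ω := by
    rw [Vt_rec μ ℱ T X R ht]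
    have hminmax : (fun ω => min (R t ω) (X (t + 1) ω + Vt μ ℱ T X R (t + 1) ω))
        = fun ω => R t ω - max (R t ω - X (t + 1) ω - Vt μ ℱ T X R (t + 1) ω) 0 := by
      funext ω
      rcases le_total (R t ω) (X (t + 1) ω + Vt μ ℱ T X R (t + 1) ω) with h | h
      · rw [min_eq_left h, max_eq_right (by linarith)]; ring
      · rw [min_eq_right h, max_eq_left (by linarith)]; ring
    rw [hminmax]
    have hmax_int : Integrable
        (fun ω => max (R t ω - X (t + 1) ω - Vt μ ℱ T X R (t + 1) ω) 0) μ :=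
      ((((hRint t).sub (hXint (t + 1))).sub (Vt_int μ ℱ T X R (t + 1))).sup
        (integrable_zero _ _ _)).congr (Filter.Eventually.of_forall fun ω => rfl)
    have hsub : μ[(fun ω => R t ω
          - max (R t ω - X (t + 1) ω - Vt μ ℱ T X R (t + 1) ω) 0) | ℱ t]
        =ᵐ[μ] μ[R t | ℱ t]
          - μ[(fun ω => max (R t ω - X (t + 1) ω - Vt μ ℱ T X R (t + 1) ω) 0) | ℱ t] :=
      condExp_sub (hRint t) hmax_int _
    have hRcond : μ[R t | ℱ t] = R t :=
      condExp_of_stronglyMeasurable (ℱ.le t) (hRadapted t) (hRint t)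
    have hVcongr : (fun ω => max (R t ω - X (t + 1) ω - Vt μ ℱ T X R (t + 1) ω) 0)
        =ᵐ[μ] fun ω => max (R t ω - X (t + 1) ω - V (t + 1) ω) 0 := by
      filter_upwards [hVeq (t + 1) (by omega)] with ω e
      rw [e]
    have hcc := condExp_congr_ae (μ := μ) (m := ℱ t) hVcongr
    filter_upwards [hsub, hcc] with ω e1 e2
    rw [e1, Pi.sub_apply, hRcond, ← e2]
  exact (hVeq t ht.le).trans hmain
end

section
/- The stopping times τ*_t := inf{ s ∈ {t+1,...,T} : R_{s-1} - X_s - V_s < 0 } ∧ (T+1) are optimal: E^Q_t[ Σ_{s=t+1}^{τ*_t - 1} X_s + R_{τ*_t - 1} ] = essinf over τ ∈ S_{t+1,T+1} of E^Q_t[ Σ_{s=t+1}^{τ-1} X_s + R_{τ-1} ]. -/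
open MeasureTheory Finset

set_option linter.unusedSectionVars false
set_option maxHeartbeats 1000000

section OptimalStoppingAux

variable {Ω : Type*} {m0 : MeasurableSpace Ω} {μ : Measure Ω} [IsProbabilityMeasure μ]
  {ℱ : Filtration ℕ m0} {T : ℕ} {X R V : ℕ → Ω → ℝ} {τstar : ℕ → Ω → ℕ}

lemma integrable_comp_st {f : ℕ → Ω → ℝ} (hf : ∀ k, Integrable (f k) μ)
    {τ : Ω → ℕ} (hτ : IsStoppingTime ℱ (fun ω => (τ ω : WithTop ℕ))) {a b : ℕ} (hτv : ∀ ω, τ ω ∈ Set.Icc a b) :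
    Integrable (fun ω => f (τ ω) ω) μ := by
  have hmeas : ∀ k, MeasurableSet {ω | τ ω = k} := fun k =>
    ℱ.le k _ (by simpa using hτ.measurableSet_eq_of_countable k)
  have heq : (fun ω => f (τ ω) ω)
      = fun ω => ∑ k ∈ Finset.Icc a b, ({ω' | τ ω' = k}).indicator (f k) ω := by
    funext ω
    rw [Finset.sum_eq_single (τ ω)]
    · rw [Set.indicator_of_mem (by simp : ω ∈ {ω' | τ ω' = τ ω})]
    · intro k _ hne
      exact Set.indicator_of_notMem (fun h => hne (h.symm)) _
    · intro h
      exact absurd (Finset.mem_Icc.mpr ⟨(hτv ω).1, (hτv ω).2⟩) h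
  rw [heq]
  exact integrable_finset_sum _ (fun k _ => (hf k).indicator (hmeas k))

lemma sum_Icc_bot {m a : ℕ} (h : a ≤ m) (f : ℕ → ℝ) :
    ∑ s ∈ Finset.Icc a m, f s = f a + ∑ s ∈ Finset.Icc (a+1) m, f s := by
  have : Finset.Icc a m = insert a (Finset.Icc (a+1) m) := by
    ext s; simp [Finset.mem_Icc]; omega
  rw [this, Finset.sum_insert (by simp)]

lemma hV_meas (hVT : V T = 0)
    (hVrec : ∀ t < T, V t = fun ω =>
      R t ω - (μ[fun ω' => max (R t ω' - X (t + 1) ω' - V (t + 1) ω') 0 | ℱ t]) ω)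
    (hRadapted : ∀ t, StronglyMeasurable[ℱ t] (R t)) :
    ∀ s ≤ T, StronglyMeasurable[ℱ s] (V s) := by
  intro s hs
  rcases lt_or_eq_of_le hs with h | h
  · rw [hVrec s h]
    exact (hRadapted s).sub stronglyMeasurable_condExp
  · rw [h, hVT]; exact stronglyMeasurable_const

lemma hV_int (hVT : V T = 0)
    (hVrec : ∀ t < T, V t = fun ω =>
      R t ω - (μ[fun ω' => max (R t ω' - X (t + 1) ω' - V (t + 1) ω') 0 | ℱ t]) ω)
    (hRint : ∀ t, Integrable (R t) μ) :
    ∀ s ≤ T, Integrable (V s) μ := by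
  intro s hs
  rcases lt_or_eq_of_le hs with h | h
  · rw [hVrec s h]
    exact (hRint s).sub integrable_condExp
  · rw [h, hVT]; exact integrable_zero _ _ _

lemma tstar_mem (hτstar : ∀ t, τstar t = fun ω =>
      sInf ({s : ℕ | t + 1 ≤ s ∧ s ≤ T ∧ R (s - 1) ω - X s ω - V s ω < 0} ∪ {T + 1})) :
    ∀ t ≤ T, ∀ ω, τstar t ω ∈ Set.Icc (t + 1) (T + 1) := by
  intro t ht ω
  rw [hτstar]
  constructor
  · refine le_csInf ⟨T+1, Or.inr rfl⟩ ?_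
    rintro b (hb | hb)
    · exact hb.1
    · simp only [Set.mem_singleton_iff] at hb; omega
  · exact Nat.sInf_le (Or.inr rfl)

lemma tstar_stop (hτstar : ∀ t, τstar t = fun ω =>
      sInf ({s : ℕ | t + 1 ≤ s ∧ s ≤ T ∧ R (s - 1) ω - X s ω - V s ω < 0} ∪ {T + 1}))
    (hXadapted : ∀ t, StronglyMeasurable[ℱ t] (X t))
    (hRadapted : ∀ t, StronglyMeasurable[ℱ t] (R t))
    (hVmeas : ∀ s ≤ T, StronglyMeasurable[ℱ s] (V s)) :
    ∀ t, IsStoppingTime ℱ (fun ω => (τstar t ω : WithTop ℕ)) := by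
  intro t n
  show MeasurableSet[ℱ n] {ω | ((τstar t ω : ℕ) : WithTop ℕ) ≤ ((n : ℕ) : WithTop ℕ)}
  simp only [Nat.cast_le]
  rcases le_or_gt (T + 1) n with hn | hn
  · have : {ω | τstar t ω ≤ n} = Set.univ := by
      ext ω
      simp only [Set.mem_setOf_eq, Set.mem_univ, iff_true]
      rw [hτstar]
      exact le_trans (Nat.sInf_le (Or.inr rfl)) hn
    rw [this]; exact MeasurableSet.univ
  · have hnT : n ≤ T := by omega
    have : {ω | τstar t ω ≤ n}
        = ⋃ s ∈ Finset.Icc (t+1) n, {ω | R (s - 1) ω - X s ω - V s ω < 0} := by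
      ext ω
      simp only [Set.mem_setOf_eq, Set.mem_iUnion, Finset.mem_Icc, exists_prop]
      rw [hτstar]
      beta_reduce
      constructor
      · intro h
        have hne : ({s : ℕ | t + 1 ≤ s ∧ s ≤ T ∧ R (s - 1) ω - X s ω - V s ω < 0}
            ∪ {T + 1}).Nonempty := ⟨T+1, Or.inr rfl⟩
        have hmem := Nat.sInf_mem hne
        set i := sInf ({s : ℕ | t + 1 ≤ s ∧ s ≤ T ∧ R (s - 1) ω - X s ω - V s ω < 0}
            ∪ {T + 1}) with hi
        rcases hmem with hm | hm
        · exact ⟨i, ⟨hm.1, h⟩, hm.2.2⟩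
        · simp only [Set.mem_singleton_iff] at hm; omega
      · rintro ⟨s, ⟨hs1, hs2⟩, hs3⟩
        exact le_trans (Nat.sInf_le (Or.inl ⟨hs1, by omega, hs3⟩)) hs2
    rw [this]
    refine (Finset.Icc (t+1) n).measurableSet_biUnion ?_
    intro s hs
    rw [Finset.mem_Icc] at hs
    have hsT : s ≤ T := by omega
    have hmeas : StronglyMeasurable[ℱ s] (fun ω => R (s - 1) ω - X s ω - V s ω) :=
      (((hRadapted (s-1)).mono (ℱ.mono (Nat.sub_le s 1))).sub (hXadapted s)).sub
        (hVmeas s hsT)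
    exact ℱ.mono hs.2 _ (hmeas.measurableSet_lt stronglyMeasurable_const)

lemma tstar_rec (hτstar : ∀ t, τstar t = fun ω =>
      sInf ({s : ℕ | t + 1 ≤ s ∧ s ≤ T ∧ R (s - 1) ω - X s ω - V s ω < 0} ∪ {T + 1})) :
    ∀ t < T, ∀ ω,
      (R t ω - X (t+1) ω - V (t+1) ω < 0 → τstar t ω = t + 1) ∧
      (¬ (R t ω - X (t+1) ω - V (t+1) ω < 0) → τstar t ω = τstar (t+1) ω) := by
  intro t ht ω
  constructor
  · intro h
    have h1 : τstar t ω ≤ t + 1 := by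
      rw [hτstar]
      exact Nat.sInf_le (Or.inl ⟨le_refl _, by omega, by simpa using h⟩)
    have h2 := (tstar_mem hτstar t (by omega) ω).1
    omega
  · intro h
    have hset : ({s : ℕ | t + 1 ≤ s ∧ s ≤ T ∧ R (s - 1) ω - X s ω - V s ω < 0} ∪ {T + 1})
        = ({s : ℕ | t + 1 + 1 ≤ s ∧ s ≤ T ∧ R (s - 1) ω - X s ω - V s ω < 0} ∪ {T + 1}) := by
      ext s
      simp only [Set.mem_union, Set.mem_setOf_eq, Set.mem_singleton_iff]
      constructor
      · rintro (⟨h1, h2, h3⟩ | h1)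
        · rcases eq_or_lt_of_le h1 with he | hl
          · exfalso; apply h; rw [← he] at h3; simpa using h3
          · exact Or.inl ⟨hl, h2, h3⟩
        · exact Or.inr h1
      · rintro (⟨h1, h2, h3⟩ | h1)
        · exact Or.inl ⟨by omega, h2, h3⟩
        · exact Or.inr h1
    rw [hτstar t, hτstar (t+1)]
    simp only
    rw [hset]

lemma key_ind (hXint : ∀ t, Integrable (X t) μ) (hXadapted : ∀ t, StronglyMeasurable[ℱ t] (X t))
    (hRint : ∀ t, Integrable (R t) μ) (hRadapted : ∀ t, StronglyMeasurable[ℱ t] (R t))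
    (hRT : R T = 0) (hVT : V T = 0)
    (hVrec : ∀ t < T, V t = fun ω =>
      R t ω - (μ[fun ω' => max (R t ω' - X (t + 1) ω' - V (t + 1) ω') 0 | ℱ t]) ω)
    (hτstar : ∀ t, τstar t = fun ω =>
      sInf ({s : ℕ | t + 1 ≤ s ∧ s ≤ T ∧ R (s - 1) ω - X s ω - V s ω < 0} ∪ {T + 1})) :
    ∀ k t, t + k = T →
      (∀ τ : Ω → ℕ, IsStoppingTime ℱ (fun ω => (τ ω : WithTop ℕ)) → (∀ ω, τ ω ∈ Set.Icc (t + 1) (T + 1)) →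
        V t ≤ᵐ[μ]
          μ[fun ω => (∑ s ∈ Finset.Icc (t + 1) (τ ω - 1), X s ω) + R (τ ω - 1) ω | ℱ t]) ∧
      (μ[fun ω => (∑ s ∈ Finset.Icc (t + 1) (τstar t ω - 1), X s ω)
          + R (τstar t ω - 1) ω | ℱ t] =ᵐ[μ] V t) := by
  have hVm : ∀ s ≤ T, StronglyMeasurable[ℱ s] (V s) := hV_meas hVT hVrec hRadapted
  have hVi : ∀ s ≤ T, Integrable (V s) μ := hV_int hVT hVrec hRint
  intro k
  induction k with
  | zero =>
    intro t htk
    have ht : t = T := by omega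
    subst ht
    have hzero : ∀ (σ : Ω → ℕ), (∀ ω, σ ω ∈ Set.Icc (t + 1) (t + 1)) →
        (fun ω => (∑ s ∈ Finset.Icc (t + 1) (σ ω - 1), X s ω) + R (σ ω - 1) ω)
          = (0 : Ω → ℝ) := by
      intro σ hσ
      funext ω
      have hσω : σ ω = t + 1 := le_antisymm (hσ ω).2 (hσ ω).1
      rw [hσω]
      simp [Finset.Icc_eq_empty (show ¬ (t + 1 ≤ t + 1 - 1) by omega), hRT]
    constructor
    · intro τ hτ hτv
      rw [hzero τ hτv, condExp_zero, hVT]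
    · have hτsv : ∀ ω, τstar t ω ∈ Set.Icc (t + 1) (t + 1) := tstar_mem hτstar t le_rfl
      rw [hzero (τstar t) hτsv, condExp_zero, hVT]
  | succ k ih =>
    intro t htk
    have ht : t < T := by omega
    obtain ⟨ih1, ih2⟩ := ih (t + 1) (by omega)
    have hV1m : StronglyMeasurable[ℱ (t+1)] (V (t+1)) := hVm (t+1) (by omega)
    have hV1i : Integrable (V (t+1)) μ := hVi (t+1) (by omega)
    have hmaxint : Integrable (fun ω => max (R t ω - X (t+1) ω - V (t+1) ω) 0) μ :=
      (((hRint t).sub (hXint (t+1))).sub hV1i).pos_part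
    have hWint : Integrable (fun ω => R t ω - max (R t ω - X (t+1) ω - V (t+1) ω) 0) μ :=
      (hRint t).sub hmaxint
    -- conditional expectation of W equals V t
    have hWcond : μ[(fun ω => R t ω - max (R t ω - X (t+1) ω - V (t+1) ω) 0) | ℱ t]
        =ᵐ[μ] V t := by
      have h1 := condExp_sub (m := ℱ t) (μ := μ) (hRint t) hmaxint
      have h2 : μ[R t | ℱ t] = R t :=
        condExp_of_stronglyMeasurable (ℱ.le t) (hRadapted t) (hRint t)
      rw [hVrec t ht]
      refine h1.trans ?_
      rw [h2]
      exact Filter.EventuallyEq.rfl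
    -- core decomposition
    have core : ∀ (A : Set Ω), MeasurableSet[ℱ (t+1)] A →
        ∀ (σ' : Ω → ℕ), IsStoppingTime ℱ (fun ω => (σ' ω : WithTop ℕ)) → (∀ ω, σ' ω ∈ Set.Icc (t+1+1) (T+1)) →
        ∀ (σ : Ω → ℕ),
        (∀ ω, ω ∈ A → σ ω = t+1) → (∀ ω, ω ∉ A → σ ω = σ' ω) →
        μ[(fun ω => (∑ s ∈ Finset.Icc (t+1) (σ ω - 1), X s ω) + R (σ ω - 1) ω) | ℱ (t+1)]
          =ᵐ[μ] fun ω => A.indicator (R t) ω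
            + Aᶜ.indicator (fun ω' => X (t+1) ω'
              + (μ[(fun ω'' => (∑ s ∈ Finset.Icc (t+1+1) (σ' ω'' - 1), X s ω'')
                  + R (σ' ω'' - 1) ω'') | ℱ (t+1)]) ω') ω := by
      intro A hA σ' hσ' hσ'v σ hσA hσAc
      have hApm : MeasurableSet A := ℱ.le (t+1) _ hA
      have hG'int : Integrable
          (fun ω => (∑ s ∈ Finset.Icc (t+1+1) (σ' ω - 1), X s ω) + R (σ' ω - 1) ω) μ :=
        integrable_comp_st
          (f := fun k ω => (∑ s ∈ Finset.Icc (t+1+1) (k - 1), X s ω) + R (k - 1) ω)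
          (fun k => (integrable_finset_sum _ fun s _ => hXint s).add (hRint _)) hσ' hσ'v
      have hXG'int : Integrable
          (fun ω => X (t+1) ω
            + ((∑ s ∈ Finset.Icc (t+1+1) (σ' ω - 1), X s ω) + R (σ' ω - 1) ω)) μ :=
        (hXint (t+1)).add hG'int
      have hdecomp : (fun ω => (∑ s ∈ Finset.Icc (t+1) (σ ω - 1), X s ω) + R (σ ω - 1) ω)
          = fun ω => A.indicator (R t) ω
            + Aᶜ.indicator (fun ω' => X (t+1) ω'
              + ((∑ s ∈ Finset.Icc (t+1+1) (σ' ω' - 1), X s ω') + R (σ' ω' - 1) ω')) ω := by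
        funext ω
        by_cases hω : ω ∈ A
        · rw [Set.indicator_of_mem hω, Set.indicator_of_notMem (by simpa using hω), hσA ω hω]
          simp [Finset.Icc_eq_empty (show ¬ (t + 1 ≤ t + 1 - 1) by omega)]
        · rw [Set.indicator_of_notMem hω, Set.indicator_of_mem (Set.mem_compl hω), hσAc ω hω]
          have h2 : t + 1 ≤ σ' ω - 1 := by have := (hσ'v ω).1; omega
          rw [sum_Icc_bot h2 (fun s => X s ω)]
          ring
      rw [hdecomp]
      have hind1int : Integrable (A.indicator (R t)) μ := (hRint t).indicator hApm
      have hind2int : Integrable (Aᶜ.indicator (fun ω' => X (t+1) ω'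
          + ((∑ s ∈ Finset.Icc (t+1+1) (σ' ω' - 1), X s ω') + R (σ' ω' - 1) ω'))) μ :=
        hXG'int.indicator hApm.compl
      have hadd := condExp_add (m := ℱ (t+1)) (μ := μ) hind1int hind2int
      refine hadd.trans ?_
      have he1 : μ[A.indicator (R t) | ℱ (t+1)] = A.indicator (R t) :=
        condExp_of_stronglyMeasurable (ℱ.le (t+1))
          (((hRadapted t).mono (ℱ.mono (Nat.le_succ t))).indicator hA) hind1int
      have he2 := condExp_indicator (m := ℱ (t+1)) (μ := μ) hXG'int hA.compl
      have he4 : μ[X (t+1) | ℱ (t+1)] = X (t+1) :=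
        condExp_of_stronglyMeasurable (ℱ.le (t+1)) (hXadapted (t+1)) (hXint (t+1))
      have he3 : μ[(fun ω => X (t+1) ω
            + ((∑ s ∈ Finset.Icc (t+1+1) (σ' ω - 1), X s ω) + R (σ' ω - 1) ω)) | ℱ (t+1)]
          =ᵐ[μ] fun ω => X (t+1) ω
            + (μ[(fun ω'' => (∑ s ∈ Finset.Icc (t+1+1) (σ' ω'' - 1), X s ω'')
                + R (σ' ω'' - 1) ω'') | ℱ (t+1)]) ω := by
        refine (condExp_add (m := ℱ (t+1)) (μ := μ) (hXint (t+1)) hG'int).trans ?_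
        rw [he4]
        exact Filter.EventuallyEq.rfl
      rw [he1]
      filter_upwards [he2, he3] with ω h2 h3
      simp only [Pi.add_apply]
      congr 1
      rw [h2]
      by_cases hω : ω ∈ Aᶜ
      · rw [Set.indicator_of_mem hω, Set.indicator_of_mem hω]
        exact h3
      · rw [Set.indicator_of_notMem hω, Set.indicator_of_notMem hω]
    constructor
    · -- lower bound for arbitrary stopping times
      intro τ hτ hτv
      have hτ' : IsStoppingTime ℱ (fun ω => ((max (τ ω) (t+1+1) : ℕ) : WithTop ℕ)) := by
          have e : (fun ω => ((max (τ ω) (t+1+1) : ℕ) : WithTop ℕ))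
              = fun ω => max ((τ ω : ℕ) : WithTop ℕ) ((t+1+1 : ℕ) : WithTop ℕ) := by
            funext ω
            rcases le_total (τ ω) (t+1+1) with h | h
            · rw [max_eq_right h, max_eq_right (by exact_mod_cast h)]
            · rw [max_eq_left h, max_eq_left (by exact_mod_cast h)]
          rw [e]
          exact hτ.max_const (t+1+1)
      have hτ'v : ∀ ω, max (τ ω) (t+1+1) ∈ Set.Icc (t+1+1) (T+1) := fun ω =>
        ⟨le_max_right _ _, max_le (hτv ω).2 (by omega)⟩
      have hA : MeasurableSet[ℱ (t+1)] {ω | τ ω = t+1} :=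
        by
          have h : MeasurableSet[ℱ (t+1)] {ω | ((τ ω : ℕ) : WithTop ℕ) = ((t+1 : ℕ) : WithTop ℕ)} :=
            hτ.measurableSet_eq_of_countable (t+1)
          simpa only [Nat.cast_inj] using h
      have hAc : ∀ ω, ω ∉ {ω' | τ ω' = t+1} → τ ω = max (τ ω) (t+1+1) := by
        intro ω hω
        have h1 : t+1 ≤ τ ω := (hτv ω).1
        have h2 : ¬ (τ ω = t+1) := hω
        exact (max_eq_left (by omega)).symm
      have hcore := core _ hA _ hτ' hτ'v τ (fun ω hω => hω) hAc
      have hVle := ih1 _ hτ' hτ'v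
      have hle1 : (fun ω => R t ω - max (R t ω - X (t+1) ω - V (t+1) ω) 0)
          ≤ᵐ[μ] μ[(fun ω => (∑ s ∈ Finset.Icc (t+1) (τ ω - 1), X s ω)
              + R (τ ω - 1) ω) | ℱ (t+1)] := by
        filter_upwards [hcore, hVle] with ω hc hv
        rw [hc]
        by_cases hω : ω ∈ {ω' | τ ω' = t+1}
        · rw [Set.indicator_of_mem hω, Set.indicator_of_notMem (Set.notMem_compl_iff.mpr hω)]
          have h1 := le_max_right (R t ω - X (t+1) ω - V (t+1) ω) (0:ℝ)
          simp only [add_zero]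
          linarith
        · rw [Set.indicator_of_notMem hω, Set.indicator_of_mem (Set.mem_compl hω)]
          have h1 := le_max_left (R t ω - X (t+1) ω - V (t+1) ω) (0:ℝ)
          linarith
      refine hWcond.symm.trans_le ?_
      refine (condExp_mono hWint integrable_condExp hle1).trans ?_
      exact (condExp_condExp_of_le (ℱ.mono (Nat.le_succ t)) (ℱ.le (t+1))).le
    · -- optimality of τstar
      have hA : MeasurableSet[ℱ (t+1)] {ω | R t ω - X (t+1) ω - V (t+1) ω < 0} :=
        ((((hRadapted t).mono (ℱ.mono (Nat.le_succ t))).sub (hXadapted (t+1))).sub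
          hV1m).measurableSet_lt stronglyMeasurable_const
      have hτs1 : IsStoppingTime ℱ (fun ω => (τstar (t+1) ω : WithTop ℕ)) :=
        tstar_stop hτstar hXadapted hRadapted hVm (t+1)
      have hτs1v : ∀ ω, τstar (t+1) ω ∈ Set.Icc (t+1+1) (T+1) :=
        tstar_mem hτstar (t+1) (by omega)
      have hrec := tstar_rec hτstar t ht
      have hcore := core _ hA (τstar (t+1)) hτs1 hτs1v (τstar t)
        (fun ω hω => (hrec ω).1 hω) (fun ω hω => (hrec ω).2 hω)
      have hcomb : μ[(fun ω => (∑ s ∈ Finset.Icc (t+1) (τstar t ω - 1), X s ω)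
            + R (τstar t ω - 1) ω) | ℱ (t+1)]
          =ᵐ[μ] (fun ω => R t ω - max (R t ω - X (t+1) ω - V (t+1) ω) 0) := by
        refine hcore.trans ?_
        filter_upwards [ih2] with ω h2
        by_cases hω : ω ∈ {ω' | R t ω' - X (t+1) ω' - V (t+1) ω' < 0}
        · rw [Set.indicator_of_mem hω, Set.indicator_of_notMem (Set.notMem_compl_iff.mpr hω)]
          have hlt : R t ω - X (t+1) ω - V (t+1) ω < 0 := hω
          rw [max_eq_right hlt.le]
          ring
        · rw [Set.indicator_of_notMem hω, Set.indicator_of_mem (Set.mem_compl hω)]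
          rw [h2]
          have hge : (0:ℝ) ≤ R t ω - X (t+1) ω - V (t+1) ω := not_lt.mp hω
          rw [max_eq_left hge]
          ring
      refine ((condExp_condExp_of_le (ℱ.mono (Nat.le_succ t)) (ℱ.le (t+1))).symm.trans
        ?_).trans hWcond
      exact condExp_congr_ae hcomb
end OptimalStoppingAux

/-- The stopping times `τ*_t := inf{s ∈ {t+1,...,T} : R_{s-1} - X_s - V_s < 0} ∧ (T+1)`
are optimal for the stopping problem defining `V_t`: `τ*_t` is a stopping time with
values in `{t+1,...,T+1}` and its conditional expected payoff is a.e. less than or equal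
to that of any stopping time `τ ∈ S_{t+1,T+1}` (hence it attains the essential infimum).
Here `V` is defined by the backward recursion `V_T = 0`,
`V_t = R_t - E^Q_t[(R_t - X_{t+1} - V_{t+1})_+]`. -/
theorem stmt_3 {Ω : Type*} {m0 : MeasurableSpace Ω} (μ : Measure Ω) [IsProbabilityMeasure μ]
    (ℱ : Filtration ℕ m0) (T : ℕ) (X R V : ℕ → Ω → ℝ)
    (hXint : ∀ t, Integrable (X t) μ) (hXadapted : ∀ t, StronglyMeasurable[ℱ t] (X t))
    (hRint : ∀ t, Integrable (R t) μ) (hRadapted : ∀ t, StronglyMeasurable[ℱ t] (R t))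
    (hRT : R T = 0) (hVT : V T = 0)
    (hVrec : ∀ t < T, V t = fun ω =>
      R t ω - (μ[fun ω' => max (R t ω' - X (t + 1) ω' - V (t + 1) ω') 0 | ℱ t]) ω)
    (τstar : ℕ → Ω → ℕ)
    (hτstar : ∀ t, τstar t = fun ω =>
      sInf ({s : ℕ | t + 1 ≤ s ∧ s ≤ T ∧ R (s - 1) ω - X s ω - V s ω < 0} ∪ {T + 1})) :
    ∀ t < T,
      IsStoppingTime ℱ (fun ω => (τstar t ω : WithTop ℕ)) ∧
      (∀ ω, τstar t ω ∈ Set.Icc (t + 1) (T + 1)) ∧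
      (∀ τ : Ω → ℕ, IsStoppingTime ℱ (fun ω => (τ ω : WithTop ℕ)) → (∀ ω, τ ω ∈ Set.Icc (t + 1) (T + 1)) →
        μ[fun ω => (∑ s ∈ Finset.Icc (t + 1) (τstar t ω - 1), X s ω)
            + R (τstar t ω - 1) ω | ℱ t]
          ≤ᵐ[μ]
        μ[fun ω => (∑ s ∈ Finset.Icc (t + 1) (τ ω - 1), X s ω)
            + R (τ ω - 1) ω | ℱ t]) := by
  intro t ht
  have hVm : ∀ s ≤ T, StronglyMeasurable[ℱ s] (V s) := hV_meas hVT hVrec hRadapted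
  refine ⟨tstar_stop hτstar hXadapted hRadapted hVm t, tstar_mem hτstar t (le_of_lt ht), ?_⟩
  intro τ hτ hτv
  obtain ⟨h1, h2⟩ := key_ind hXint hXadapted hRint hRadapted hRT hVT hVrec hτstar
    (T - t) t (by omega)
  exact h2.trans_le (h1 τ hτ hτv)
end

section
/- The cumulative residual value process V^S_t := Σ_{s=1}^t X_s + V_t, t = 0,...,T, is a (Q, F)-submartingale; equivalently, V_t ≤ E^Q_t[ Σ_{s=t+1}^T X_s ] for all t ∈ {0,...,T}. -/
open MeasureTheory Finset

/-- The cumulative residual value process `V^S_t := Σ_{s=1}^t X_s + V_t`, `t = 0,...,T`,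
is a `(Q,F)`-submartingale; equivalently, `V_t ≤ E^Q_t[Σ_{s=t+1}^T X_s]` for all
`t ∈ {0,...,T}`. Here `V` is given by `V_T = 0` and the backward recursion
`V_t = R_t - E^Q_t[(R_t - X_{t+1} - V_{t+1})_+]`. -/
theorem stmt_4 {Ω : Type*} {m0 : MeasurableSpace Ω} (μ : Measure Ω) [IsProbabilityMeasure μ]
    (ℱ : Filtration ℕ m0) (T : ℕ) (X R V : ℕ → Ω → ℝ)
    (hXint : ∀ t, Integrable (X t) μ) (hXadapted : ∀ t, StronglyMeasurable[ℱ t] (X t))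
    (hRint : ∀ t, Integrable (R t) μ) (hRadapted : ∀ t, StronglyMeasurable[ℱ t] (R t))
    (hRT : R T = 0) (hVT : V T = 0)
    (hVrec : ∀ t < T, V t = fun ω =>
      R t ω - (μ[fun ω' => max (R t ω' - X (t + 1) ω' - V (t + 1) ω') 0 | ℱ t]) ω) :
    (∀ t < T,
      (fun ω => (∑ s ∈ Finset.Icc 1 t, X s ω) + V t ω) ≤ᵐ[μ]
        μ[fun ω => (∑ s ∈ Finset.Icc 1 (t + 1), X s ω) + V (t + 1) ω | ℱ t]) ∧
    (∀ t ≤ T, V t ≤ᵐ[μ] μ[fun ω => ∑ s ∈ Finset.Icc (t + 1) T, X s ω | ℱ t]) := by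
  -- integrability of V by backward induction
  have hVgood : ∀ k t, T = t + k → Integrable (V t) μ := by
    intro k
    induction k with
    | zero =>
      intro t ht
      obtain rfl : t = T := by omega
      rw [hVT]
      exact integrable_zero _ _ _
    | succ k ih =>
      intro t ht
      have htT : t < T := by omega
      have ihi := ih (t + 1) (by omega)
      rw [hVrec t htT]
      exact (hRint t).sub integrable_condExp
  -- key inequality
  have hkey : ∀ t < T, V t ≤ᵐ[μ] μ[fun ω => X (t + 1) ω + V (t + 1) ω | ℱ t] := by
    intro t ht
    have hVi : Integrable (V (t + 1)) μ := hVgood (T - (t + 1)) (t + 1) (by omega)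
    set f : Ω → ℝ := fun ω => R t ω - (X (t + 1) ω + V (t + 1) ω) with hf
    have hfi : Integrable f μ := (hRint t).sub ((hXint (t + 1)).add hVi)
    have h1 : μ[f | ℱ t] ≤ᵐ[μ] μ[fun ω => max (f ω) 0 | ℱ t] :=
      condExp_mono hfi hfi.pos_part (Filter.Eventually.of_forall fun ω => le_max_left _ _)
    have h2 : μ[f | ℱ t] =ᵐ[μ]
        fun ω => R t ω - (μ[fun ω' => X (t + 1) ω' + V (t + 1) ω' | ℱ t]) ω := by
      have hfe : f = R t - fun ω => X (t + 1) ω + V (t + 1) ω := rfl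
      rw [hfe]
      refine (condExp_sub (m := ℱ t) (hRint t) ((hXint (t + 1)).add hVi)).trans ?_
      have hR : μ[R t | ℱ t] = R t :=
        condExp_of_stronglyMeasurable (ℱ.le t) (hRadapted t) (hRint t)
      rw [hR]
      rfl
    have hrec := hVrec t ht
    have hmaxeq : (fun ω' => max (R t ω' - X (t + 1) ω' - V (t + 1) ω') 0)
        = fun ω => max (f ω) 0 := by
      funext ω; rw [hf]; ring_nf
    rw [hrec, hmaxeq]
    filter_upwards [h1, h2] with ω h1ω h2ω
    have : R t ω - (μ[fun ω' => X (t + 1) ω' + V (t + 1) ω' | ℱ t]) ω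
        ≤ (μ[fun ω => max (f ω) 0 | ℱ t]) ω := h2ω ▸ h1ω
    simpa using by linarith
  -- part 2
  have part2 : ∀ k t, T = t + k →
      V t ≤ᵐ[μ] μ[fun ω => ∑ s ∈ Finset.Icc (t + 1) T, X s ω | ℱ t] := by
    intro k
    induction k with
    | zero =>
      intro t ht
      have hteq : t = T := by omega
      subst hteq
      have he : (fun ω => ∑ s ∈ Finset.Icc (t + 1) t, X s ω) = (0 : Ω → ℝ) := by
        funext ω; rw [Finset.Icc_eq_empty (by omega)]; simp
      rw [hVT, he, condExp_zero]
    | succ k ih =>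
      intro t ht
      have htT : t < T := by omega
      have hIH := ih (t + 1) (by omega)
      have hVi : Integrable (V (t + 1)) μ := hVgood k (t + 1) (by omega)
      have hSi : Integrable (fun ω => ∑ s ∈ Finset.Icc (t + 2) T, X s ω) μ :=
        integrable_finset_sum _ fun s _ => hXint s
      -- monotone step
      have step1 : μ[fun ω => X (t + 1) ω + V (t + 1) ω | ℱ t] ≤ᵐ[μ]
          μ[fun ω => X (t + 1) ω +
            (μ[fun ω' => ∑ s ∈ Finset.Icc (t + 2) T, X s ω' | ℱ (t + 1)]) ω | ℱ t] := by
        refine condExp_mono ((hXint (t + 1)).add hVi)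
          ((hXint (t + 1)).add integrable_condExp) ?_
        filter_upwards [hIH] with ω hω
        exact add_le_add_right hω _
      have step2 : μ[fun ω => X (t + 1) ω +
            (μ[fun ω' => ∑ s ∈ Finset.Icc (t + 2) T, X s ω' | ℱ (t + 1)]) ω | ℱ t] =ᵐ[μ]
          μ[fun ω => ∑ s ∈ Finset.Icc (t + 1) T, X s ω | ℱ t] := by
        have e1 := condExp_add (μ := μ) (m := ℱ t) (hXint (t + 1))
          (integrable_condExp (f := fun ω => ∑ s ∈ Finset.Icc (t + 2) T, X s ω)
            (m := ℱ (t + 1)))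
        have e2 := condExp_condExp_of_le (μ := μ)
          (f := fun ω => ∑ s ∈ Finset.Icc (t + 2) T, X s ω)
          (ℱ.mono (Nat.le_succ t)) (ℱ.le (t + 1))
        have e3 := (condExp_add (μ := μ) (m := ℱ t) (hXint (t + 1)) hSi).symm
        have hsplit : (fun ω => X (t + 1) ω + ∑ s ∈ Finset.Icc (t + 2) T, X s ω)
            = fun ω => ∑ s ∈ Finset.Icc (t + 1) T, X s ω := by
          funext ω
          have hins : Finset.Icc (t + 1) T = insert (t + 1) (Finset.Icc (t + 2) T) := by
            ext x; simp only [Finset.mem_Icc, Finset.mem_insert]; omega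
          rw [hins, Finset.sum_insert (by simp only [Finset.mem_Icc]; omega)]
        calc μ[fun ω => X (t + 1) ω +
              (μ[fun ω' => ∑ s ∈ Finset.Icc (t + 2) T, X s ω' | ℱ (t + 1)]) ω | ℱ t]
            =ᵐ[μ] μ[X (t + 1) | ℱ t] +
              μ[μ[fun ω' => ∑ s ∈ Finset.Icc (t + 2) T, X s ω' | ℱ (t + 1)] | ℱ t] := e1
          _ =ᵐ[μ] μ[X (t + 1) | ℱ t] +
              μ[fun ω => ∑ s ∈ Finset.Icc (t + 2) T, X s ω | ℱ t] := by
              filter_upwards [e2] with ω hω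
              simp only [Pi.add_apply, hω]
          _ =ᵐ[μ] μ[fun ω => X (t + 1) ω + ∑ s ∈ Finset.Icc (t + 2) T, X s ω | ℱ t] := e3
          _ = μ[fun ω => ∑ s ∈ Finset.Icc (t + 1) T, X s ω | ℱ t] := by rw [hsplit]
      exact ((hkey t htT).trans step1).trans step2.le
  refine ⟨?_, fun t ht => part2 (T - t) t (by omega)⟩
  -- part 1
  intro t ht
  have hVi : Integrable (V (t + 1)) μ := hVgood (T - (t + 1)) (t + 1) (by omega)
  have hS : StronglyMeasurable[ℱ t] (fun ω => ∑ s ∈ Finset.Icc 1 t, X s ω) :=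
    Finset.stronglyMeasurable_fun_sum _ fun s hs =>
      (hXadapted s).mono (ℱ.mono (Finset.mem_Icc.mp hs).2)
  have hSi : Integrable (fun ω => ∑ s ∈ Finset.Icc 1 t, X s ω) μ :=
    integrable_finset_sum _ fun s _ => hXint s
  have hfun : (fun ω => (∑ s ∈ Finset.Icc 1 (t + 1), X s ω) + V (t + 1) ω)
      = (fun ω => ∑ s ∈ Finset.Icc 1 t, X s ω) + fun ω => X (t + 1) ω + V (t + 1) ω := by
    funext ω
    have hins : Finset.Icc 1 (t + 1) = insert (t + 1) (Finset.Icc 1 t) := by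
      ext x; simp only [Finset.mem_Icc, Finset.mem_insert]; omega
    simp only [Pi.add_apply]
    rw [hins, Finset.sum_insert (by simp only [Finset.mem_Icc]; omega)]
    ring
  have e1 : μ[fun ω => (∑ s ∈ Finset.Icc 1 (t + 1), X s ω) + V (t + 1) ω | ℱ t] =ᵐ[μ]
      (fun ω => ∑ s ∈ Finset.Icc 1 t, X s ω) +
        μ[fun ω => X (t + 1) ω + V (t + 1) ω | ℱ t] := by
    rw [hfun]
    refine (condExp_add (m := ℱ t) hSi ((hXint (t + 1)).add hVi)).trans ?_
    rw [condExp_of_stronglyMeasurable (ℱ.le t) hS hSi]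
    exact Filter.Eventually.of_forall fun ω => rfl
  filter_upwards [hkey t ht, e1] with ω h1ω h2ω
  rw [h2ω]
  exact add_le_add_right h1ω _
end

section
/- If (R^S_t)_{t=0}^T defined by R^S_t := Σ_{s=1}^t X_s + R_t is a (Q, F)-supermartingale, then the process (C_t)_{t=0}^T defined by C_T = 0 and C_t = E^Q_t[(R_t - X_{t+1} - R_{t+1} + C_{t+1})_+] is a (Q, F)-supermartingale. In particular, C_0 = 0 then implies C_t = 0 almost surely for all t. -/
open MeasureTheory Finset

lemma sm_finset_sum {Ω : Type*} {m : MeasurableSpace Ω} {ι : Type*} (s : Finset ι)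
    (f : ι → Ω → ℝ) (h : ∀ i ∈ s, StronglyMeasurable[m] (f i)) :
    StronglyMeasurable[m] (fun ω => ∑ i ∈ s, f i ω) := by
  classical
  induction s using Finset.induction_on with
  | empty => simpa using (stronglyMeasurable_const : StronglyMeasurable[m] fun _ : Ω => (0:ℝ))
  | insert a s hi ih =>
    have : (fun ω => ∑ i ∈ insert a s, f i ω) =
        fun ω => f a ω + ∑ i ∈ s, f i ω := by
      funext ω; rw [Finset.sum_insert hi]
    rw [this]
    exact (h a (Finset.mem_insert_self _ _)).add
      (ih fun j hj => h j (Finset.mem_insert_of_mem hj))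

/-- If `R^S_t := Σ_{s=1}^t X_s + R_t` is a `(Q,F)`-supermartingale, then the process
`(C_t)` defined by `C_T = 0` and `C_t = E^Q_t[(R_t - X_{t+1} - R_{t+1} + C_{t+1})_+]`
is a `(Q,F)`-supermartingale; in particular, if `C_0 = 0` a.s. then `C_t = 0` a.s.
for all `t`. -/
theorem stmt_6 {Ω : Type*} {m0 : MeasurableSpace Ω} (μ : Measure Ω) [IsProbabilityMeasure μ]
    (ℱ : Filtration ℕ m0) (T : ℕ) (X R C : ℕ → Ω → ℝ)
    (hXint : ∀ t, Integrable (X t) μ) (hXadapted : ∀ t, StronglyMeasurable[ℱ t] (X t))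
    (hRint : ∀ t, Integrable (R t) μ) (hRadapted : ∀ t, StronglyMeasurable[ℱ t] (R t))
    (hRT : R T = 0)
    -- R^S is a (Q,F)-supermartingale:
    (hRSsuper : ∀ t < T,
      μ[fun ω => (∑ s ∈ Finset.Icc 1 (t + 1), X s ω) + R (t + 1) ω | ℱ t] ≤ᵐ[μ]
        fun ω => (∑ s ∈ Finset.Icc 1 t, X s ω) + R t ω)
    (hCT : C T = 0)
    (hCrec : ∀ t < T, C t =
      μ[fun ω => max (R t ω - X (t + 1) ω - R (t + 1) ω + C (t + 1) ω) 0 | ℱ t]) :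
    (∀ t < T, μ[C (t + 1) | ℱ t] ≤ᵐ[μ] C t) ∧
    ((C 0 =ᵐ[μ] 0) → ∀ t ≤ T, C t =ᵐ[μ] 0) := by
  -- integrability of C
  have hCint : ∀ t, t ≤ T → Integrable (C t) μ := by
    intro t ht
    rcases eq_or_lt_of_le ht with h | h
    · rw [h, hCT]; exact integrable_zero _ _ _
    · rw [hCrec t h]; exact integrable_condExp
  -- a.e. nonnegativity of C
  have hCnonneg : ∀ t, t ≤ T → 0 ≤ᵐ[μ] C t := by
    intro t ht
    rcases eq_or_lt_of_le ht with h | h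
    · rw [h, hCT]
    · rw [hCrec t h]
      exact condExp_nonneg (Filter.Eventually.of_forall fun ω => le_max_right _ _)
  -- the supermartingale property
  have hsuper : ∀ t < T, μ[C (t + 1) | ℱ t] ≤ᵐ[μ] C t := by
    intro t ht
    have hC1 : Integrable (C (t + 1)) μ := hCint _ ht
    set g : Ω → ℝ := fun ω => X (t + 1) ω + R (t + 1) ω with hg_def
    have hgint : Integrable g μ := (hXint _).add (hRint _)
    set f : Ω → ℝ := fun ω => R t ω - X (t + 1) ω - R (t + 1) ω + C (t + 1) ω with hf_def
    have hfint : Integrable f μ :=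
      (((hRint t).sub (hXint _)).sub (hRint _)).add hC1
    -- condexp of the running sum
    set S : Ω → ℝ := fun ω => ∑ s ∈ Finset.Icc 1 t, X s ω with hS_def
    have hSsm : StronglyMeasurable[ℱ t] S :=
      sm_finset_sum _ _ fun s hs =>
        (hXadapted s).mono (ℱ.mono (Finset.mem_Icc.1 hs).2)
    have hSint : Integrable S μ := integrable_finset_sum _ fun s _ => hXint s
    -- from the supermartingale hypothesis: μ[g | ℱ t] ≤ R t a.e.
    have hkey : μ[g | ℱ t] ≤ᵐ[μ] R t := by
      have hsplit : (fun ω => (∑ s ∈ Finset.Icc 1 (t + 1), X s ω) + R (t + 1) ω)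
          = fun ω => S ω + g ω := by
        funext ω
        rw [hS_def, hg_def]
        simp only []
        rw [Finset.sum_Icc_succ_top (Nat.one_le_iff_ne_zero.2 (Nat.succ_ne_zero t))]
        ring
      have h1 : μ[fun ω => S ω + g ω | ℱ t] =ᵐ[μ] fun ω => S ω + (μ[g | ℱ t]) ω := by
        refine (condExp_add hSint hgint (ℱ t)).trans ?_
        rw [condExp_of_stronglyMeasurable (ℱ.le t) hSsm hSint]
        exact Filter.EventuallyEq.rfl
      have h2 := hRSsuper t ht
      rw [hsplit] at h2
      filter_upwards [h1, h2] with ω h1ω h2ω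
      have := h1ω ▸ h2ω
      simpa [hS_def] using this
    -- chain of inequalities
    have hmono : μ[f | ℱ t] ≤ᵐ[μ] μ[fun ω => max (f ω) 0 | ℱ t] :=
      condExp_mono hfint hfint.pos_part
        (Filter.Eventually.of_forall fun ω => le_max_left _ _)
    have hfcond : μ[f | ℱ t] =ᵐ[μ]
        fun ω => R t ω - (μ[g | ℱ t]) ω + (μ[C (t + 1) | ℱ t]) ω := by
      have hfsplit : f = fun ω => (R t ω - g ω) + C (t + 1) ω := by
        funext ω; rw [hf_def, hg_def]; ring
      rw [hfsplit]
      refine (condExp_add ((hRint t).sub hgint) hC1 (ℱ t)).trans ?_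
      have hsub := condExp_sub (hRint t) hgint (m := ℱ t)
      have hRcond : μ[R t | ℱ t] = R t :=
        condExp_of_stronglyMeasurable (ℱ.le t) (hRadapted t) (hRint t)
      filter_upwards [hsub] with ω hω
      simp only [Pi.add_apply, Pi.sub_apply] at *
      rw [hω, hRcond]
    rw [hCrec t ht]
    calc μ[C (t + 1) | ℱ t]
        ≤ᵐ[μ] μ[f | ℱ t] := by
          filter_upwards [hfcond, hkey] with ω h1ω h2ω
          rw [h1ω]
          linarith
      _ ≤ᵐ[μ] μ[fun ω => max (f ω) 0 | ℱ t] := hmono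
  refine ⟨hsuper, ?_⟩
  -- the "in particular" part
  intro hC0
  intro t htT
  induction t with
  | zero => exact hC0
  | succ n ih =>
    have hn : n < T := htT
    have hCn : C n =ᵐ[μ] 0 := ih (le_of_lt hn)
    have hle : μ[C (n + 1) | ℱ n] ≤ᵐ[μ] C n := hsuper n hn
    have hge : 0 ≤ᵐ[μ] μ[C (n + 1) | ℱ n] := condExp_nonneg (hCnonneg _ htT)
    have hcond0 : μ[C (n + 1) | ℱ n] =ᵐ[μ] 0 := by
      filter_upwards [hle, hge, hCn] with ω h1 h2 h3
      have := h3 ▸ h1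
      simp only [Pi.zero_apply] at *
      linarith
    have hint0 : ∫ ω, C (n + 1) ω ∂μ = 0 := by
      rw [← integral_condExp (ℱ.le n) (f := C (n + 1)) (μ := μ)]
      rw [integral_eq_zero_iff_of_nonneg_ae hge integrable_condExp]
      exact hcond0
    have := (integral_eq_zero_iff_of_nonneg_ae (hCnonneg _ htT) (hCint _ htT)).1 hint0
    exact this
end

section
/- Let ρ_t be a translation-invariant conditional risk measure and φ_t(Y) := ρ_t(-Y) - E^Q_t[(ρ_t(-Y) - Y)_+]. If the aggregate residual cash flow is F_0-measurable, i.e. Σ_{t=1}^T X_t = K with K F_0-measurable, then defining V_t := φ_t(X_{t+1} + V_{t+1}) backward with V_T = 0, one has V_0 = K and C_t := E^Q_t[(ρ_t(-X_{t+1}-V_{t+1}) - X_{t+1} - V_{t+1})_+] = 0 for all t ∈ {0,...,T-1}. -/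
open MeasureTheory Finset

/-- If the aggregate residual cash flow is deterministic, `Σ_{t=1}^T X_t = K`, then the
backward recursion `V_T = 0`, `V_t = φ_t(X_{t+1} + V_{t+1})` with
`φ_t(Y) = ρ_t(-Y) - E^Q_t[(ρ_t(-Y) - Y)_+]` yields `V_0 = K`, and
`C_t := E^Q_t[(ρ_t(-X_{t+1}-V_{t+1}) - X_{t+1} - V_{t+1})_+] = 0` for all `t < T`. -/
theorem stmt_8 {Ω : Type*} {m0 : MeasurableSpace Ω} (Q : Measure Ω) [IsProbabilityMeasure Q]
    (ℱ : Filtration ℕ m0) (T : ℕ) (X : ℕ → Ω → ℝ)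
    (hXint : ∀ t, Integrable (X t) Q) (hXadapted : ∀ t, StronglyMeasurable[ℱ t] (X t))
    (ρ φ : ℕ → (Ω → ℝ) → Ω → ℝ)
    -- ρ_t is translation invariant, monotone and normalized:
    (hρadd : ∀ t (Y lam : Ω → ℝ), StronglyMeasurable[ℱ t] lam →
      ρ t (fun ω => Y ω + lam ω) =ᵐ[Q] fun ω => ρ t Y ω - lam ω)
    (hρmono : ∀ t (Y Ytil : Ω → ℝ), Y ≤ᵐ[Q] Ytil → ρ t Ytil ≤ᵐ[Q] ρ t Y)
    (hρzero : ∀ t, ρ t 0 =ᵐ[Q] 0)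
    -- φ_t is given by ρ_t and the Q-conditional expectation:
    (hφdef : ∀ t (Y : Ω → ℝ), φ t Y = fun ω =>
      ρ t (fun x => -Y x) ω -
        (Q[fun x => max (ρ t (fun y => -Y y) x - Y x) 0 | ℱ t]) ω)
    -- φ_t is translation equivariant, normalized, and respects a.e. equality:
    (hφadd : ∀ t (Y lam : Ω → ℝ), StronglyMeasurable[ℱ t] lam →
      φ t (fun ω => Y ω + lam ω) =ᵐ[Q] fun ω => φ t Y ω + lam ω)
    (hφzero : ∀ t, φ t 0 =ᵐ[Q] 0)
    (hφcongr : ∀ t (Y Ytil : Ω → ℝ), Y =ᵐ[Q] Ytil → φ t Y =ᵐ[Q] φ t Ytil)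
    (V : ℕ → Ω → ℝ) (hVT : V T = 0)
    (hVrec : ∀ t < T, V t = φ t (fun ω => X (t + 1) ω + V (t + 1) ω))
    (K : ℝ) (hK : ∀ᵐ ω ∂Q, ∑ t ∈ Finset.Icc 1 T, X t ω = K) :
    (V 0 =ᵐ[Q] fun _ => K) ∧
    (∀ t < T,
      Q[fun ω => max (ρ t (fun x => -(X (t + 1) x + V (t + 1) x)) ω
          - X (t + 1) ω - V (t + 1) ω) 0 | ℱ t] =ᵐ[Q] 0) := by
  set lam : ℕ → Ω → ℝ := fun t ω => K - ∑ s ∈ Finset.Icc 1 t, X s ω with hlam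
  have hlamSM : ∀ t, StronglyMeasurable[ℱ t] (lam t) := by
    intro t
    exact stronglyMeasurable_const.sub
      (Finset.stronglyMeasurable_fun_sum _ fun s hs =>
        (hXadapted s).mono (ℱ.mono (Finset.mem_Icc.mp hs).2))
  -- step identity: lam (t+1) ω + X (t+1) ω = lam t ω
  have hstep : ∀ t ω, X (t + 1) ω + lam (t + 1) ω = lam t ω := by
    intro t ω
    have : ∑ s ∈ Finset.Icc 1 (t + 1), X s ω
        = (∑ s ∈ Finset.Icc 1 t, X s ω) + X (t + 1) ω := by
      rw [← Finset.sum_Icc_succ_top (by omega : 1 ≤ t + 1)]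
    simp [hlam, this]; ring
  -- φ t (lam t) =ᵐ lam t
  have hφlam : ∀ t, φ t (lam t) =ᵐ[Q] lam t := by
    intro t
    have h0 : (lam t) = (fun ω => (0 : Ω → ℝ) ω + lam t ω) := by
      funext ω; simp
    calc φ t (lam t) = φ t (fun ω => (0 : Ω → ℝ) ω + lam t ω) := by rw [← h0]
      _ =ᵐ[Q] fun ω => φ t 0 ω + lam t ω := hφadd t 0 (lam t) (hlamSM t)
      _ =ᵐ[Q] lam t := by
          filter_upwards [hφzero t] with ω hω
          simp [hω]
  -- main induction: V t =ᵐ lam t whenever t + d = T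
  have hmain : ∀ d t, t + d = T → V t =ᵐ[Q] lam t := by
    intro d
    induction d with
    | zero =>
      intro t ht
      simp only [Nat.add_zero] at ht
      subst ht
      filter_upwards [hK] with ω hω
      simp [hVT, hlam, hω]
    | succ d ih =>
      intro t ht
      have hIH : V (t + 1) =ᵐ[Q] lam (t + 1) := ih (t + 1) (by omega)
      have hYlam : (fun ω => X (t + 1) ω + V (t + 1) ω) =ᵐ[Q] lam t := by
        filter_upwards [hIH] with ω hω
        rw [hω, hstep]
      rw [hVrec t (by omega)]
      exact (hφcongr t _ _ hYlam).trans (hφlam t)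
  have hVeq : ∀ t, t ≤ T → V t =ᵐ[Q] lam t := fun t ht => hmain (T - t) t (by omega)
  constructor
  · have := hVeq 0 (Nat.zero_le T)
    filter_upwards [this] with ω hω
    simpa [hlam] using hω
  · intro t ht
    have hIH : V (t + 1) =ᵐ[Q] lam (t + 1) := hVeq (t + 1) (by omega)
    have hYlam : (fun ω => X (t + 1) ω + V (t + 1) ω) =ᵐ[Q] lam t := by
      filter_upwards [hIH] with ω hω
      rw [hω, hstep]
    -- ρ t (-Y) =ᵐ ρ t (-lam t)
    have hnegY : (fun x => -(X (t + 1) x + V (t + 1) x)) =ᵐ[Q] fun ω => -(lam t ω) := by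
      filter_upwards [hYlam] with ω hω
      simp only [hω]
    have hρcongr : ρ t (fun x => -(X (t + 1) x + V (t + 1) x)) =ᵐ[Q]
        ρ t (fun ω => -(lam t ω)) := by
      have h1 := hρmono t _ _ hnegY.le
      have h2 := hρmono t _ _ hnegY.symm.le
      filter_upwards [h1, h2] with ω h1 h2
      exact le_antisymm h2 h1
    have hρlam : ρ t (fun ω => -(lam t ω)) =ᵐ[Q] lam t := by
      have h0 : (fun ω => -(lam t ω)) = (fun ω => (0 : Ω → ℝ) ω + (-(lam t ω))) := by
        funext ω; simp
      have hSM : StronglyMeasurable[ℱ t] (fun ω => -(lam t ω)) := (hlamSM t).neg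
      calc ρ t (fun ω => -(lam t ω))
          = ρ t (fun ω => (0 : Ω → ℝ) ω + (-(lam t ω))) := by rw [← h0]
        _ =ᵐ[Q] fun ω => ρ t 0 ω - (-(lam t ω)) := hρadd t 0 _ hSM
        _ =ᵐ[Q] lam t := by
            filter_upwards [hρzero t] with ω hω
            simp [hω]
    -- the integrand is a.e. 0
    have hzero : (fun ω => max (ρ t (fun x => -(X (t + 1) x + V (t + 1) x)) ω
        - X (t + 1) ω - V (t + 1) ω) 0) =ᵐ[Q] (0 : Ω → ℝ) := by
      filter_upwards [hρcongr, hρlam, hYlam] with ω h1 h2 h3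
      have : ρ t (fun x => -(X (t + 1) x + V (t + 1) x)) ω = lam t ω := h1.trans h2
      simp only [this, Pi.zero_apply]
      have : lam t ω - X (t + 1) ω - V (t + 1) ω = 0 := by
        rw [← h3]; ring
      simp [this]
    calc Q[fun ω => max (ρ t (fun x => -(X (t + 1) x + V (t + 1) x)) ω
          - X (t + 1) ω - V (t + 1) ω) 0 | ℱ t]
        =ᵐ[Q] Q[(0 : Ω → ℝ) | ℱ t] := condExp_congr_ae hzero
      _ = 0 := condExp_zero
      _ =ᵐ[Q] 0 := Filter.EventuallyEq.rfl
end

section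
/- In the Gaussian model, with X_s := g_s^T G_s, one has E^P_t[ E^Q_{t+1}[ Σ_{s=t+1}^T X_s ] ] = E^Q_t[ Σ_{s=t+1}^T X_s ] - Σ_{s=t+1}^T g_s^T B_{s,t+1} λ_{t+1}. -/
set_option linter.unusedSectionVars false

open MeasureTheory ProbabilityTheory Finset Matrix Real
open MeasureTheory ProbabilityTheory Finset Matrix

/-- The Gaussian process `G_t = A_t + Σ_{s=1}^t B_{t,s} ε_s`. -/
noncomputable def GProc {Ω : Type*} {n : ℕ} (A : ℕ → Fin n → ℝ)
    (B : ℕ → ℕ → Matrix (Fin n) (Fin n) ℝ) (ε : ℕ → Ω → Fin n → ℝ)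
    (t : ℕ) (ω : Ω) : Fin n → ℝ :=
  fun i => A t i + ∑ s ∈ Finset.Icc 1 t, ((B t s).mulVec (ε s ω)) i

/-- The Girsanov density process `D_t = exp(Σ_{s=1}^t (λ_s^T ε_s - ½ λ_s^T λ_s))`. -/
noncomputable def DDens {Ω : Type*} {n : ℕ} (l : ℕ → Fin n → ℝ)
    (ε : ℕ → Ω → Fin n → ℝ) (t : ℕ) (ω : Ω) : ℝ :=
  Real.exp (∑ s ∈ Finset.Icc 1 t, ((l s) ⬝ᵥ (ε s ω) - (1 / 2) * ((l s) ⬝ᵥ (l s))))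

/-- The filtration generated by `ε_1, ..., ε_t`. -/
def gaussFilt {Ω : Type*} {n : ℕ} (ε : ℕ → Ω → Fin n → ℝ) (t : ℕ) :
    MeasurableSpace Ω :=
  ⨆ s ∈ Finset.Icc 1 t, MeasurableSpace.comap (ε s) inferInstance


/-- Product of independent integrable functions: integrability and factorization. -/
theorem aux_prod_int {Ω ι β : Type*} {m0 : MeasurableSpace Ω} {μ : Measure Ω}
    [IsProbabilityMeasure μ] [MeasurableSpace β]
    (X : ι → Ω → β) (hX : iIndepFun (m := fun _ => (inferInstance : MeasurableSpace β)) X μ)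
    (hXm : ∀ i, Measurable (X i)) (f : ι → β → ℝ) (hfm : ∀ i, Measurable (f i))
    (s : Finset ι) (hint : ∀ i ∈ s, Integrable (fun ω => f i (X i ω)) μ) :
    Integrable (fun ω => ∏ i ∈ s, f i (X i ω)) μ ∧
      ∫ ω, ∏ i ∈ s, f i (X i ω) ∂μ = ∏ i ∈ s, ∫ ω, f i (X i ω) ∂μ := by
  classical
  induction s using Finset.induction with
  | empty => simp
  | @insert i s hi ih =>
    have hY : iIndepFun (m := fun _ => (inferInstance : MeasurableSpace ℝ))
        (fun j => fun ω => f j (X j ω)) μ := hX.comp f hfm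
    have hYm : ∀ j, Measurable (fun ω => f j (X j ω)) := fun j => (hfm j).comp (hXm j)
    have hIndep : IndepFun (∏ j ∈ s, fun ω => f j (X j ω)) (fun ω => f i (X i ω)) μ :=
      hY.indepFun_finsetProd_of_notMem hYm hi
    have hprodeq : (∏ j ∈ s, fun ω => f j (X j ω)) = fun ω => ∏ j ∈ s, f j (X j ω) := by
      funext ω; simp
    rw [hprodeq] at hIndep
    have hint' : ∀ j ∈ s, Integrable (fun ω => f j (X j ω)) μ :=
      fun j hj => hint j (Finset.mem_insert_of_mem hj)
    obtain ⟨ihInt, ihEq⟩ := ih hint'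
    have hii : Integrable (fun ω => f i (X i ω)) μ := hint i (Finset.mem_insert_self i s)
    have hmul : Integrable ((fun ω => ∏ j ∈ s, f j (X j ω)) * fun ω => f i (X i ω)) μ :=
      hIndep.integrable_mul ihInt hii
    have hmeq : ((fun ω => ∏ j ∈ s, f j (X j ω)) * fun ω => f i (X i ω))
        = fun ω => ∏ j ∈ insert i s, f j (X j ω) := by
      funext ω; simp [Finset.prod_insert hi, mul_comm]
    constructor
    · rw [← hmeq]; exact hmul
    · rw [← hmeq, hIndep.integral_mul_eq_mul_integral ihInt.1 hii.1, ihEq,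
        Finset.prod_insert hi, mul_comm]

lemma aux_pdf_shift (b x : ℝ) :
    rexp (b * x) * gaussianPDFReal 0 1 x = rexp (b ^ 2 / 2) * gaussianPDFReal b 1 x := by
  simp only [gaussianPDFReal, NNReal.coe_one, mul_one, sub_zero]
  rw [mul_left_comm, mul_left_comm (rexp (b ^ 2 / 2)), ← Real.exp_add, ← Real.exp_add]
  congr 2
  ring

lemma aux_mean_int (b : ℝ) :
    Integrable (fun x => x * gaussianPDFReal b 1 x) ∧
      ∫ x, x * gaussianPDFReal b 1 x = b := by
  have h0 : (fun y : ℝ => y * gaussianPDFReal 0 1 y)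
      = fun y => (√(2 * Real.pi))⁻¹ * (y * rexp (-(1/2) * y ^ 2)) := by
    funext y
    simp only [gaussianPDFReal, NNReal.coe_one, mul_one, sub_zero]
    ring_nf
  have hInt0 : Integrable (fun y : ℝ => y * gaussianPDFReal 0 1 y) := by
    rw [h0]
    exact (integrable_mul_exp_neg_mul_sq (by norm_num : (0:ℝ) < 1/2)).const_mul _
  have hodd : ∀ y : ℝ, (-y) * gaussianPDFReal 0 1 (-y) = -(y * gaussianPDFReal 0 1 y) := by
    intro y
    simp only [gaussianPDFReal, NNReal.coe_one, mul_one, sub_zero]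
    have : (-y) ^ 2 = y ^ 2 := by ring
    rw [this]
    ring
  have hzero : ∫ y, y * gaussianPDFReal 0 1 y = 0 := by
    have h1 : ∫ y, y * gaussianPDFReal 0 1 y
        = ∫ y, (-y) * gaussianPDFReal 0 1 (-y) :=
      (integral_neg_eq_self (fun y => y * gaussianPDFReal 0 1 y) volume).symm
    simp_rw [hodd] at h1
    rw [integral_neg] at h1
    linarith
  have hshift : ∀ x : ℝ, gaussianPDFReal b 1 x = gaussianPDFReal 0 1 (x - b) := by
    intro x
    rw [gaussianPDFReal_sub, zero_add]
  have hdecomp : (fun x : ℝ => x * gaussianPDFReal b 1 x)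
      = (fun x => (fun y => y * gaussianPDFReal 0 1 y) (x - b))
        + fun x => b * gaussianPDFReal b 1 x := by
    funext x
    simp only [Pi.add_apply, hshift x]
    ring
  have hI1 : Integrable (fun x => (fun y => y * gaussianPDFReal 0 1 y) (x - b)) :=
    hInt0.comp_sub_right b
  have hI2 : Integrable (fun x => b * gaussianPDFReal b 1 x) :=
    (integrable_gaussianPDFReal b 1).const_mul b
  constructor
  · rw [hdecomp]; exact hI1.add hI2
  · rw [hdecomp, integral_add' hI1 hI2,
      integral_sub_right_eq_self (fun y => y * gaussianPDFReal 0 1 y) b, hzero,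
      integral_const_mul, integral_gaussianPDFReal_eq_one b one_ne_zero]
    ring

lemma aux_int_gauss (f : ℝ → ℝ)
    (hfi : Integrable (fun x => f x * gaussianPDFReal 0 1 x)) :
    Integrable f (gaussianReal 0 1) ∧
      ∫ x, f x ∂(gaussianReal 0 1) = ∫ x, f x * gaussianPDFReal 0 1 x := by
  have hne : (1 : NNReal) ≠ 0 := one_ne_zero
  rw [gaussianReal_of_var_ne_zero 0 hne]
  have hcoe : gaussianPDF 0 1 = fun x => ((gaussianPDFReal 0 1 x).toNNReal : ENNReal) := rfl
  constructor
  · rw [integrable_withDensity_iff (measurable_gaussianPDF 0 1)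
      (ae_of_all _ fun x => ENNReal.ofReal_lt_top)]
    have : (fun x => f x * (gaussianPDF 0 1 x).toReal)
        = fun x => f x * gaussianPDFReal 0 1 x := by
      funext x
      rw [gaussianPDF, ENNReal.toReal_ofReal (gaussianPDFReal_nonneg _ _ _)]
    rw [this]
    exact hfi
  · rw [hcoe, integral_withDensity_eq_integral_smul
      ((measurable_gaussianPDFReal 0 1).real_toNNReal) f]
    congr 1
    funext x
    rw [NNReal.smul_def, smul_eq_mul, Real.coe_toNNReal _ (gaussianPDFReal_nonneg _ _ _),
      mul_comm]

lemma aux_gauss_exp (b : ℝ) :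
    Integrable (fun x => rexp (b * x)) (gaussianReal 0 1) ∧
      ∫ x, rexp (b * x) ∂(gaussianReal 0 1) = rexp (b ^ 2 / 2) := by
  have hshift : (fun x => rexp (b * x) * gaussianPDFReal 0 1 x)
      = fun x => rexp (b ^ 2 / 2) * gaussianPDFReal b 1 x := by
    funext x; exact aux_pdf_shift b x
  have hfi : Integrable (fun x => rexp (b * x) * gaussianPDFReal 0 1 x) := by
    rw [hshift]; exact (integrable_gaussianPDFReal b 1).const_mul _
  obtain ⟨h1, h2⟩ := aux_int_gauss (fun x => rexp (b * x)) hfi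
  refine ⟨h1, ?_⟩
  rw [h2, hshift, integral_const_mul, integral_gaussianPDFReal_eq_one b one_ne_zero, mul_one]

lemma aux_gauss_id_exp (b : ℝ) :
    Integrable (fun x => rexp (b * x) * x) (gaussianReal 0 1) ∧
      ∫ x, rexp (b * x) * x ∂(gaussianReal 0 1) = b * rexp (b ^ 2 / 2) := by
  have hshift : (fun x => (rexp (b * x) * x) * gaussianPDFReal 0 1 x)
      = fun x => rexp (b ^ 2 / 2) * (x * gaussianPDFReal b 1 x) := by
    funext x
    have := aux_pdf_shift b x
    calc rexp (b * x) * x * gaussianPDFReal 0 1 x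
        = x * (rexp (b * x) * gaussianPDFReal 0 1 x) := by ring
      _ = x * (rexp (b ^ 2 / 2) * gaussianPDFReal b 1 x) := by rw [this]
      _ = rexp (b ^ 2 / 2) * (x * gaussianPDFReal b 1 x) := by ring
  obtain ⟨hm1, hm2⟩ := aux_mean_int b
  have hfi : Integrable (fun x => (rexp (b * x) * x) * gaussianPDFReal 0 1 x) := by
    rw [hshift]; exact hm1.const_mul _
  obtain ⟨h1, h2⟩ := aux_int_gauss (fun x => rexp (b * x) * x) hfi
  refine ⟨h1, ?_⟩
  rw [h2, hshift, integral_const_mul, hm2, mul_comm]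

lemma aux_meas_dot {n : ℕ} (c : Fin n → ℝ) : Measurable (fun x : Fin n → ℝ => c ⬝ᵥ x) := by
  unfold dotProduct
  exact Finset.measurable_sum _ fun i _ => by fun_prop

lemma aux_meas_explin (b : ℝ) : Measurable fun x : ℝ => rexp (b * x) :=
  Real.measurable_exp.comp (measurable_id.const_mul b)

lemma aux_meas_explin_mul (b d : ℝ) : Measurable fun x : ℝ => rexp (b * x) * (d * x) :=
  (aux_meas_explin b).mul (measurable_id.const_mul d)

lemma aux_half {n : ℕ} (a : Fin n → ℝ) : ∑ i, (a i) ^ 2 / 2 = (a ⬝ᵥ a) / 2 := by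
  simp only [dotProduct]
  rw [Finset.sum_div]
  exact Finset.sum_congr rfl fun i _ => by ring

lemma aux_transfer {Ω : Type*} {m0 : MeasurableSpace Ω} {μ : Measure Ω}
    (X : Ω → ℝ) (hX : Measurable X) (hlaw : Measure.map X μ = gaussianReal 0 1)
    (f : ℝ → ℝ) (hf : Measurable f) (hfi : Integrable f (gaussianReal 0 1)) :
    Integrable (fun ω => f (X ω)) μ ∧
      ∫ ω, f (X ω) ∂μ = ∫ x, f x ∂(gaussianReal 0 1) := by
  rw [← hlaw] at hfi ⊢
  constructor
  · exact (integrable_map_measure hf.aestronglyMeasurable hX.aemeasurable).mp hfi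
  · exact (integral_map hX.aemeasurable hf.aestronglyMeasurable).symm

section Vec
variable {Ω : Type*} {m0 : MeasurableSpace Ω} {μ : Measure Ω} [IsProbabilityMeasure μ]
  {n : ℕ} {ε : ℕ → Ω → Fin n → ℝ}

lemma aux_vec_exp (hmeas : ∀ t, Measurable (ε t))
    (hindep' : ∀ t, iIndepFun (m := fun _ => (inferInstance : MeasurableSpace ℝ))
      (fun i ω => ε t ω i) μ)
    (hgauss : ∀ t i, Measure.map (fun ω => ε t ω i) μ = gaussianReal 0 1)
    (u : ℕ) (a : Fin n → ℝ) :
    Integrable (fun ω => rexp (a ⬝ᵥ ε u ω)) μ ∧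
      ∫ ω, rexp (a ⬝ᵥ ε u ω) ∂μ = rexp ((a ⬝ᵥ a) / 2) := by
  classical
  have hXm : ∀ i : Fin n, Measurable (fun ω => ε u ω i) :=
    fun i => (measurable_pi_apply i).comp (hmeas u)
  have hint : ∀ i : Fin n, Integrable (fun ω => rexp (a i * ε u ω i)) μ ∧
      ∫ ω, rexp (a i * ε u ω i) ∂μ = rexp ((a i) ^ 2 / 2) := by
    intro i
    have hg := aux_gauss_exp (a i)
    obtain ⟨h1, h2⟩ := aux_transfer (fun ω => ε u ω i) (hXm i) (hgauss u i)
      (fun x => rexp (a i * x)) (aux_meas_explin _) hg.1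
    exact ⟨h1, by rw [h2, hg.2]⟩
  obtain ⟨hI, hE⟩ := aux_prod_int (fun i ω => ε u ω i) (hindep' u) hXm
    (fun i x => rexp (a i * x)) (fun i => aux_meas_explin _) Finset.univ
    (fun i _ => (hint i).1)
  have heq : (fun ω => rexp (a ⬝ᵥ ε u ω)) = fun ω => ∏ i, rexp (a i * ε u ω i) := by
    funext ω
    rw [← Real.exp_sum]
    simp [dotProduct]
  constructor
  · rw [heq]; exact hI
  · rw [heq, hE, Finset.prod_congr rfl fun i _ => (hint i).2, ← Real.exp_sum, aux_half]

lemma aux_vec_expmul (hmeas : ∀ t, Measurable (ε t))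
    (hindep' : ∀ t, iIndepFun (m := fun _ => (inferInstance : MeasurableSpace ℝ))
      (fun i ω => ε t ω i) μ)
    (hgauss : ∀ t i, Measure.map (fun ω => ε t ω i) μ = gaussianReal 0 1)
    (u : ℕ) (a c : Fin n → ℝ) :
    Integrable (fun ω => rexp (a ⬝ᵥ ε u ω) * (c ⬝ᵥ ε u ω)) μ ∧
      ∫ ω, rexp (a ⬝ᵥ ε u ω) * (c ⬝ᵥ ε u ω) ∂μ
        = rexp ((a ⬝ᵥ a) / 2) * (c ⬝ᵥ a) := by
  classical
  have hXm : ∀ i : Fin n, Measurable (fun ω => ε u ω i) :=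
    fun i => (measurable_pi_apply i).comp (hmeas u)
  have main : ∀ j : Fin n,
      Integrable (fun ω => rexp (a ⬝ᵥ ε u ω) * (c j * ε u ω j)) μ ∧
      ∫ ω, rexp (a ⬝ᵥ ε u ω) * (c j * ε u ω j) ∂μ
        = rexp ((a ⬝ᵥ a) / 2) * (c j * a j) := by
    intro j
    have hint : ∀ i : Fin n,
        Integrable (fun ω => rexp (a i * ε u ω i) * (if i = j then c j * ε u ω i else 1)) μ ∧
        ∫ ω, rexp (a i * ε u ω i) * (if i = j then c j * ε u ω i else 1) ∂μ
          = rexp ((a i) ^ 2 / 2) * (if i = j then c j * a j else 1) := by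
      intro i
      by_cases h : i = j
      · subst h
        have e1 : (fun ω => rexp (a i * ε u ω i) * (if i = i then c i * ε u ω i else 1))
            = fun ω => rexp (a i * ε u ω i) * (c i * ε u ω i) := by
          funext ω; rw [if_pos rfl]
        have e2 : rexp ((a i) ^ 2 / 2) * (if i = i then c i * a i else 1)
            = rexp ((a i) ^ 2 / 2) * (c i * a i) := by rw [if_pos rfl]
        rw [e1, e2]
        have hg := aux_gauss_id_exp (a i)
        have hflip : (fun x : ℝ => rexp (a i * x) * (c i * x))
            = fun x => c i * (rexp (a i * x) * x) := by funext x; ring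
        have hgi : Integrable (fun x => rexp (a i * x) * (c i * x)) (gaussianReal 0 1) := by
          rw [hflip]; exact hg.1.const_mul _
        obtain ⟨h1, h2⟩ := aux_transfer (fun ω => ε u ω i) (hXm i) (hgauss u i)
          (fun x => rexp (a i * x) * (c i * x)) (aux_meas_explin_mul _ _) hgi
        refine ⟨h1, ?_⟩
        rw [h2, hflip, integral_const_mul, hg.2]
        ring
      · have e1 : (fun ω => rexp (a i * ε u ω i) * (if i = j then c j * ε u ω i else 1))
            = fun ω => rexp (a i * ε u ω i) := by
          funext ω; rw [if_neg h, mul_one]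
        have e2 : rexp ((a i) ^ 2 / 2) * (if i = j then c j * a j else 1)
            = rexp ((a i) ^ 2 / 2) := by rw [if_neg h, mul_one]
        rw [e1, e2]
        have hg := aux_gauss_exp (a i)
        obtain ⟨h1, h2⟩ := aux_transfer (fun ω => ε u ω i) (hXm i) (hgauss u i)
          (fun x => rexp (a i * x)) (aux_meas_explin _) hg.1
        exact ⟨h1, by rw [h2, hg.2]⟩
    have hfm : ∀ i : Fin n,
        Measurable (fun x : ℝ => rexp (a i * x) * (if i = j then c j * x else 1)) := by
      intro i
      by_cases h : i = j
      · have : (fun x : ℝ => rexp (a i * x) * (if i = j then c j * x else 1))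
            = fun x => rexp (a i * x) * (c j * x) := by funext x; rw [if_pos h]
        rw [this]; exact aux_meas_explin_mul _ _
      · have : (fun x : ℝ => rexp (a i * x) * (if i = j then c j * x else 1))
            = fun x => rexp (a i * x) := by funext x; rw [if_neg h, mul_one]
        rw [this]; exact aux_meas_explin _
    obtain ⟨hI, hE⟩ := aux_prod_int (fun i ω => ε u ω i) (hindep' u) hXm
      (fun i x => rexp (a i * x) * (if i = j then c j * x else 1)) hfm
      Finset.univ (fun i _ => (hint i).1)
    have heq : (fun ω => rexp (a ⬝ᵥ ε u ω) * (c j * ε u ω j))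
        = fun ω => ∏ i, rexp (a i * ε u ω i) * (if i = j then c j * ε u ω i else 1) := by
      funext ω
      rw [Finset.prod_mul_distrib, ← Real.exp_sum,
        Finset.prod_ite_eq' Finset.univ j (fun i => c j * ε u ω i), if_pos (Finset.mem_univ j)]
      congr 1
    constructor
    · rw [heq]; exact hI
    · rw [heq, hE, Finset.prod_congr rfl fun i _ => (hint i).2, Finset.prod_mul_distrib,
        ← Real.exp_sum, aux_half,
        Finset.prod_ite_eq' Finset.univ j (fun _ => c j * a j), if_pos (Finset.mem_univ j)]
  have heq : (fun ω => rexp (a ⬝ᵥ ε u ω) * (c ⬝ᵥ ε u ω))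
      = fun ω => ∑ j, rexp (a ⬝ᵥ ε u ω) * (c j * ε u ω j) := by
    funext ω
    rw [← Finset.mul_sum]
    congr 1
  constructor
  · rw [heq]; exact integrable_finset_sum _ fun j _ => (main j).1
  · rw [heq, integral_finset_sum _ fun j _ => (main j).1,
      Finset.sum_congr rfl fun j _ => (main j).2, ← Finset.mul_sum]
    congr 1
end Vec

section Master
variable {Ω : Type*} {m0 : MeasurableSpace Ω} {μ : Measure Ω} [IsProbabilityMeasure μ]
  {n : ℕ} {ε : ℕ → Ω → Fin n → ℝ}

lemma aux_master0 (hmeas : ∀ t, Measurable (ε t))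
    (hindep : iIndepFun (m := fun _ => (inferInstance : MeasurableSpace (Fin n → ℝ))) ε μ)
    (hindep' : ∀ t, iIndepFun (m := fun _ => (inferInstance : MeasurableSpace ℝ))
      (fun i ω => ε t ω i) μ)
    (hgauss : ∀ t i, Measure.map (fun ω => ε t ω i) μ = gaussianReal 0 1)
    (S : Finset ℕ) (a : ℕ → Fin n → ℝ) :
    Integrable (fun ω => ∏ u ∈ S, rexp (a u ⬝ᵥ ε u ω)) μ ∧
      ∫ ω, ∏ u ∈ S, rexp (a u ⬝ᵥ ε u ω) ∂μ = ∏ u ∈ S, rexp ((a u ⬝ᵥ a u) / 2) := by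
  obtain ⟨hI, hE⟩ := aux_prod_int ε hindep hmeas (fun u x => rexp (a u ⬝ᵥ x))
    (fun u => Real.measurable_exp.comp (aux_meas_dot (a u))) S
    (fun u _ => (aux_vec_exp hmeas hindep' hgauss u (a u)).1)
  exact ⟨hI, by
    rw [hE]
    exact Finset.prod_congr rfl fun u _ => (aux_vec_exp hmeas hindep' hgauss u (a u)).2⟩

lemma aux_master (hmeas : ∀ t, Measurable (ε t))
    (hindep : iIndepFun (m := fun _ => (inferInstance : MeasurableSpace (Fin n → ℝ))) ε μ)
    (hindep' : ∀ t, iIndepFun (m := fun _ => (inferInstance : MeasurableSpace ℝ))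
      (fun i ω => ε t ω i) μ)
    (hgauss : ∀ t i, Measure.map (fun ω => ε t ω i) μ = gaussianReal 0 1)
    (S : Finset ℕ) (a : ℕ → Fin n → ℝ) (v : ℕ) (c : Fin n → ℝ) (hv : v ∈ S) :
    Integrable (fun ω => (∏ u ∈ S, rexp (a u ⬝ᵥ ε u ω)) * (c ⬝ᵥ ε v ω)) μ ∧
      ∫ ω, (∏ u ∈ S, rexp (a u ⬝ᵥ ε u ω)) * (c ⬝ᵥ ε v ω) ∂μ
        = (∏ u ∈ S, rexp ((a u ⬝ᵥ a u) / 2)) * (c ⬝ᵥ a v) := by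
  classical
  have hint : ∀ u : ℕ,
      Integrable (fun ω => rexp (a u ⬝ᵥ ε u ω) * (if u = v then c ⬝ᵥ ε u ω else 1)) μ ∧
      ∫ ω, rexp (a u ⬝ᵥ ε u ω) * (if u = v then c ⬝ᵥ ε u ω else 1) ∂μ
        = rexp ((a u ⬝ᵥ a u) / 2) * (if u = v then c ⬝ᵥ a v else 1) := by
    intro u
    by_cases h : u = v
    · subst h
      have e1 : (fun ω => rexp (a u ⬝ᵥ ε u ω) * (if u = u then c ⬝ᵥ ε u ω else 1))
          = fun ω => rexp (a u ⬝ᵥ ε u ω) * (c ⬝ᵥ ε u ω) := by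
        funext ω; rw [if_pos rfl]
      have e2 : rexp ((a u ⬝ᵥ a u) / 2) * (if u = u then c ⬝ᵥ a u else 1)
          = rexp ((a u ⬝ᵥ a u) / 2) * (c ⬝ᵥ a u) := by rw [if_pos rfl]
      rw [e1, e2]
      exact aux_vec_expmul hmeas hindep' hgauss u (a u) c
    · have e1 : (fun ω => rexp (a u ⬝ᵥ ε u ω) * (if u = v then c ⬝ᵥ ε u ω else 1))
          = fun ω => rexp (a u ⬝ᵥ ε u ω) := by
        funext ω; rw [if_neg h, mul_one]
      have e2 : rexp ((a u ⬝ᵥ a u) / 2) * (if u = v then c ⬝ᵥ a v else 1)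
          = rexp ((a u ⬝ᵥ a u) / 2) := by rw [if_neg h, mul_one]
      rw [e1, e2]
      exact aux_vec_exp hmeas hindep' hgauss u (a u)
  have hfm : ∀ u : ℕ,
      Measurable (fun x : Fin n → ℝ => rexp (a u ⬝ᵥ x) * (if u = v then c ⬝ᵥ x else 1)) := by
    intro u
    by_cases h : u = v
    · have : (fun x : Fin n → ℝ => rexp (a u ⬝ᵥ x) * (if u = v then c ⬝ᵥ x else 1))
          = fun x => rexp (a u ⬝ᵥ x) * (c ⬝ᵥ x) := by funext x; rw [if_pos h]
      rw [this]
      exact (Real.measurable_exp.comp (aux_meas_dot (a u))).mul (aux_meas_dot c)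
    · have : (fun x : Fin n → ℝ => rexp (a u ⬝ᵥ x) * (if u = v then c ⬝ᵥ x else 1))
          = fun x => rexp (a u ⬝ᵥ x) := by funext x; rw [if_neg h, mul_one]
      rw [this]
      exact Real.measurable_exp.comp (aux_meas_dot (a u))
  obtain ⟨hI, hE⟩ := aux_prod_int ε hindep hmeas
    (fun u x => rexp (a u ⬝ᵥ x) * (if u = v then c ⬝ᵥ x else 1)) hfm S
    (fun u _ => (hint u).1)
  have heq : (fun ω => (∏ u ∈ S, rexp (a u ⬝ᵥ ε u ω)) * (c ⬝ᵥ ε v ω))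
      = fun ω => ∏ u ∈ S, rexp (a u ⬝ᵥ ε u ω) * (if u = v then c ⬝ᵥ ε u ω else 1) := by
    funext ω
    rw [Finset.prod_mul_distrib, Finset.prod_ite_eq' S v (fun u => c ⬝ᵥ ε u ω), if_pos hv]
  constructor
  · rw [heq]; exact hI
  · rw [heq, hE, Finset.prod_congr rfl fun u _ => (hint u).2, Finset.prod_mul_distrib,
      Finset.prod_ite_eq' S v (fun _ => c ⬝ᵥ a v), if_pos hv]
end Master


section Filt
variable {Ω : Type*} {m0 : MeasurableSpace Ω} {μ : Measure Ω} [IsProbabilityMeasure μ]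
  {n : ℕ} {ε : ℕ → Ω → Fin n → ℝ}

lemma aux_filt_le (hmeas : ∀ t, Measurable (ε t)) (r : ℕ) : gaussFilt ε r ≤ m0 :=
  iSup_le fun s => iSup_le fun _ => (hmeas s).comap_le

lemma aux_filt_mono {r r' : ℕ} (h : r ≤ r') : gaussFilt ε r ≤ gaussFilt ε r' := by
  refine iSup_le fun s => iSup_le fun hs => ?_
  have hs' : s ∈ Finset.Icc 1 r' := by
    simp only [Finset.mem_Icc] at hs ⊢; omega
  exact le_iSup₂ (f := fun (s : ℕ) (_ : s ∈ Finset.Icc 1 r') =>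
    MeasurableSpace.comap (ε s) inferInstance) s hs'

lemma aux_meas_filt {r u : ℕ} (hu1 : 1 ≤ u) (hu2 : u ≤ r) :
    Measurable[gaussFilt ε r] (ε u) :=
  Measurable.of_comap_le (le_iSup₂ (f := fun (s : ℕ) (_ : s ∈ Finset.Icc 1 r) =>
    MeasurableSpace.comap (ε s) inferInstance) u (Finset.mem_Icc.mpr ⟨hu1, hu2⟩))

lemma aux_comap_le_tuple (S : Finset ℕ) {u : ℕ} (hu : u ∈ S) :
    MeasurableSpace.comap (ε u) inferInstance
      ≤ MeasurableSpace.comap (fun ω (i : S) => ε i ω) inferInstance := by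
  have h : ε u = (fun v : S → (Fin n → ℝ) => v ⟨u, hu⟩) ∘ (fun ω (i : S) => ε i ω) := rfl
  calc MeasurableSpace.comap (ε u) inferInstance
      = MeasurableSpace.comap (fun ω (i : S) => ε i ω)
          (MeasurableSpace.comap (fun v : S → (Fin n → ℝ) => v ⟨u, hu⟩) inferInstance) := by
        rw [MeasurableSpace.comap_comp, ← h]
    _ ≤ _ := MeasurableSpace.comap_mono (measurable_pi_apply _).comap_le

lemma aux_indep_filt
    (hindep : iIndepFun (m := fun _ => (inferInstance : MeasurableSpace (Fin n → ℝ))) ε μ)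
    (hmeas : ∀ t, Measurable (ε t)) {r u : ℕ} (hr : r < u) :
    Indep (MeasurableSpace.comap (ε u) inferInstance) (gaussFilt ε r) μ := by
  have hdis : Disjoint ({u} : Finset ℕ) (Finset.Icc 1 r) := by
    simp only [Finset.disjoint_left, Finset.mem_singleton, Finset.mem_Icc]
    rintro a rfl
    omega
  have hIF := hindep.indepFun_finset {u} (Finset.Icc 1 r) hdis hmeas
  rw [IndepFun_iff_Indep] at hIF
  refine indep_of_indep_of_le_left (indep_of_indep_of_le_right hIF ?_) ?_
  · exact iSup_le fun s => iSup_le fun hs => aux_comap_le_tuple (Finset.Icc 1 r) hs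
  · exact aux_comap_le_tuple {u} (Finset.mem_singleton_self u)

lemma aux_condexp_factor
    (hindep : iIndepFun (m := fun _ => (inferInstance : MeasurableSpace (Fin n → ℝ))) ε μ)
    (hmeas : ∀ t, Measurable (ε t)) {r u : ℕ} (hr : r < u)
    (A : Ω → ℝ) (hA : StronglyMeasurable[gaussFilt ε r] A)
    (F : (Fin n → ℝ) → ℝ) (hF : Measurable F)
    (hint : Integrable (fun ω => A ω * F (ε u ω)) μ)
    (hintF : Integrable (fun ω => F (ε u ω)) μ) :
    μ[(fun ω => A ω * F (ε u ω)) | gaussFilt ε r]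
      =ᵐ[μ] fun ω => A ω * ∫ x, F (ε u x) ∂μ := by
  have hle := aux_filt_le hmeas r
  haveI : SigmaFinite (μ.trim hle) := by
    haveI : IsFiniteMeasure (μ.trim hle) := isFiniteMeasure_trim hle
    infer_instance
  have h1 : μ[(fun ω => A ω * F (ε u ω)) | gaussFilt ε r]
      =ᵐ[μ] A * μ[(fun ω => F (ε u ω)) | gaussFilt ε r] :=
    condExp_mul_of_stronglyMeasurable_left hA hint hintF
  have hsm : StronglyMeasurable[MeasurableSpace.comap (ε u) inferInstance]
      (fun ω => F (ε u ω)) := by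
    apply Measurable.stronglyMeasurable
    exact hF.comp (Measurable.of_comap_le le_rfl)
  have h2 : μ[(fun ω => F (ε u ω)) | gaussFilt ε r]
      =ᵐ[μ] fun _ => ∫ x, F (ε u x) ∂μ :=
    condExp_indep_eq (hmeas u).comap_le hle hsm (aux_indep_filt hindep hmeas hr)
  filter_upwards [h1, h2] with ω hω1 hω2
  rw [hω1, Pi.mul_apply, hω2]
end Filt
noncomputable def auxC {n : ℕ} (B : ℕ → ℕ → Matrix (Fin n) (Fin n) ℝ)
    (g : ℕ → Fin n → ℝ) (t T u : ℕ) : Fin n → ℝ :=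
  ∑ s ∈ Finset.Icc (max (t + 1) u) T, Matrix.vecMul (g s) (B s u)

noncomputable def auxK {n : ℕ} (A : ℕ → Fin n → ℝ) (B : ℕ → ℕ → Matrix (Fin n) (Fin n) ℝ)
    (g l : ℕ → Fin n → ℝ) (t T r : ℕ) : ℝ :=
  (∑ s ∈ Finset.Icc (t + 1) T, g s ⬝ᵥ A s)
    + ∑ u ∈ Finset.Icc (r + 1) T, auxC B g t T u ⬝ᵥ l u

noncomputable def auxW {Ω : Type*} {n : ℕ} (A : ℕ → Fin n → ℝ)
    (B : ℕ → ℕ → Matrix (Fin n) (Fin n) ℝ) (g l : ℕ → Fin n → ℝ)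
    (ε : ℕ → Ω → Fin n → ℝ) (t T r : ℕ) (ω : Ω) : ℝ :=
  auxK A B g l t T r + ∑ u ∈ Finset.Icc 1 r, auxC B g t T u ⬝ᵥ ε u ω

section Main
variable {Ω : Type*} {m0 : MeasurableSpace Ω} {μ : Measure Ω} [IsProbabilityMeasure μ]
  {n : ℕ} {ε : ℕ → Ω → Fin n → ℝ} {l : ℕ → Fin n → ℝ}

lemma aux_Dfact (l : ℕ → Fin n → ℝ) (m : ℕ) (ω : Ω) :
    DDens l ε m ω = (∏ u ∈ Finset.Icc 1 m, rexp (-(1 / 2) * (l u ⬝ᵥ l u)))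
      * ∏ u ∈ Finset.Icc 1 m, rexp (l u ⬝ᵥ ε u ω) := by
  rw [DDens, Real.exp_sum, ← Finset.prod_mul_distrib]
  exact Finset.prod_congr rfl fun u _ => by rw [← Real.exp_add]; congr 1; ring

lemma aux_int_D_lin (hmeas : ∀ t, Measurable (ε t))
    (hindep : iIndepFun (m := fun _ => (inferInstance : MeasurableSpace (Fin n → ℝ))) ε μ)
    (hindep' : ∀ t, iIndepFun (m := fun _ => (inferInstance : MeasurableSpace ℝ))
      (fun i ω => ε t ω i) μ)
    (hgauss : ∀ t i, Measure.map (fun ω => ε t ω i) μ = gaussianReal 0 1)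
    (m r : ℕ) (hrm : r ≤ m) (κ : ℝ) (d : ℕ → Fin n → ℝ) :
    Integrable (fun ω => DDens l ε m ω
      * (κ + ∑ u ∈ Finset.Icc 1 r, d u ⬝ᵥ ε u ω)) μ := by
  have key : (fun ω => DDens l ε m ω * (κ + ∑ u ∈ Finset.Icc 1 r, d u ⬝ᵥ ε u ω))
      = fun ω => (∏ u ∈ Finset.Icc 1 m, rexp (-(1 / 2) * (l u ⬝ᵥ l u))) *
          (κ * ∏ u ∈ Finset.Icc 1 m, rexp (l u ⬝ᵥ ε u ω)
           + ∑ v ∈ Finset.Icc 1 r,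
              (∏ u ∈ Finset.Icc 1 m, rexp (l u ⬝ᵥ ε u ω)) * (d v ⬝ᵥ ε v ω)) := by
    funext ω
    rw [aux_Dfact l m ω, ← Finset.mul_sum]
    ring
  rw [key]
  apply Integrable.const_mul
  apply Integrable.add
  · exact ((aux_master0 hmeas hindep hindep' hgauss (Finset.Icc 1 m) l).1).const_mul κ
  · refine integrable_finset_sum _ fun v hv => ?_
    have hvm : v ∈ Finset.Icc 1 m := by
      simp only [Finset.mem_Icc] at hv ⊢; omega
    exact (aux_master hmeas hindep hindep' hgauss (Finset.Icc 1 m) l v (d v) hvm).1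

lemma aux_sm_D (l : ℕ → Fin n → ℝ) (r : ℕ) :
    StronglyMeasurable[gaussFilt ε r] (DDens l ε r) := by
  apply Measurable.stronglyMeasurable
  unfold DDens
  apply Real.measurable_exp.comp
  apply Finset.measurable_sum
  intro u hu
  rw [Finset.mem_Icc] at hu
  exact ((aux_meas_dot (l u)).comp (aux_meas_filt hu.1 hu.2)).sub measurable_const

lemma aux_sm_lin (r : ℕ) (κ : ℝ) (d : ℕ → Fin n → ℝ) :
    StronglyMeasurable[gaussFilt ε r]
      (fun ω => κ + ∑ u ∈ Finset.Icc 1 r, d u ⬝ᵥ ε u ω) := by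
  apply Measurable.stronglyMeasurable
  apply Measurable.add measurable_const
  apply Finset.measurable_sum
  intro u hu
  rw [Finset.mem_Icc] at hu
  exact (aux_meas_dot (d u)).comp (aux_meas_filt hu.1 hu.2)

lemma aux_lemA (hmeas : ∀ t, Measurable (ε t))
    (hindep : iIndepFun (m := fun _ => (inferInstance : MeasurableSpace (Fin n → ℝ))) ε μ)
    (hindep' : ∀ t, iIndepFun (m := fun _ => (inferInstance : MeasurableSpace ℝ))
      (fun i ω => ε t ω i) μ)
    (hgauss : ∀ t i, Measure.map (fun ω => ε t ω i) μ = gaussianReal 0 1)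
    (A : ℕ → Fin n → ℝ) (B : ℕ → ℕ → Matrix (Fin n) (Fin n) ℝ)
    (g : ℕ → Fin n → ℝ) (t T : ℕ) :
    ∀ (k r : ℕ), r + k = T →
      μ[(fun ω => DDens l ε T ω * auxW A B g l ε t T T ω) | gaussFilt ε r]
        =ᵐ[μ] fun ω => DDens l ε r ω * auxW A B g l ε t T r ω := by
  intro k
  induction k with
  | zero =>
    intro r hr
    have hrT : r = T := by omega
    subst hrT
    have hle := aux_filt_le hmeas r
    haveI : SigmaFinite (μ.trim hle) := by
      haveI : IsFiniteMeasure (μ.trim hle) := isFiniteMeasure_trim hle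
      infer_instance
    have hint : Integrable (fun ω => DDens l ε r ω * auxW A B g l ε t r r ω) μ :=
      aux_int_D_lin hmeas hindep hindep' hgauss r r le_rfl _ _
    exact Filter.EventuallyEq.of_eq (condExp_of_stronglyMeasurable hle
      (((aux_sm_D l r).mul (aux_sm_lin r _ _)) :
        StronglyMeasurable[gaussFilt ε r] fun ω => DDens l ε r ω * auxW A B g l ε t r r ω)
      hint)
  | succ k ihk =>
    intro r hr
    have hr1T : r + 1 ≤ T := by omega
    have hIH := ihk (r + 1) (by omega)
    have hle := aux_filt_le hmeas r
    have hle1 := aux_filt_le hmeas (r + 1)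
    haveI : SigmaFinite (μ.trim hle1) := by
      haveI : IsFiniteMeasure (μ.trim hle1) := isFiniteMeasure_trim hle1
      infer_instance
    haveI : SigmaFinite (μ.trim hle) := by
      haveI : IsFiniteMeasure (μ.trim hle) := isFiniteMeasure_trim hle
      infer_instance
    -- basic identities
    have hDsucc : ∀ ω : Ω, DDens l ε (r + 1) ω
        = DDens l ε r ω * rexp (l (r + 1) ⬝ᵥ ε (r + 1) ω
            - 1 / 2 * (l (r + 1) ⬝ᵥ l (r + 1))) := by
      intro ω
      rw [DDens, DDens, Finset.sum_Icc_succ_top (by omega : 1 ≤ r + 1), Real.exp_add]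
    have hWsucc : ∀ ω : Ω, auxW A B g l ε t T (r + 1) ω
        = (auxK A B g l t T (r + 1) + ∑ u ∈ Finset.Icc 1 r, auxC B g t T u ⬝ᵥ ε u ω)
          + auxC B g t T (r + 1) ⬝ᵥ ε (r + 1) ω := by
      intro ω
      rw [auxW, Finset.sum_Icc_succ_top (by omega : 1 ≤ r + 1), add_assoc]
    have hKr : auxK A B g l t T r
        = auxK A B g l t T (r + 1) + auxC B g t T (r + 1) ⬝ᵥ l (r + 1) := by
      rw [auxK, auxK, add_assoc]
      congr 1
      have hins : Finset.Icc (r + 1) T = insert (r + 1) (Finset.Icc (r + 2) T) := by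
        ext x
        simp only [Finset.mem_Icc, Finset.mem_insert]
        omega
      rw [hins, Finset.sum_insert (by simp only [Finset.mem_Icc]; omega), add_comm]
    -- split
    have hsplit : (fun ω => DDens l ε (r + 1) ω * auxW A B g l ε t T (r + 1) ω)
        = (fun ω => (DDens l ε r ω * (auxK A B g l t T (r + 1)
              + ∑ u ∈ Finset.Icc 1 r, auxC B g t T u ⬝ᵥ ε u ω))
            * rexp (l (r + 1) ⬝ᵥ ε (r + 1) ω - 1 / 2 * (l (r + 1) ⬝ᵥ l (r + 1))))
          + fun ω => DDens l ε r ω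
            * (rexp (l (r + 1) ⬝ᵥ ε (r + 1) ω - 1 / 2 * (l (r + 1) ⬝ᵥ l (r + 1)))
                * (auxC B g t T (r + 1) ⬝ᵥ ε (r + 1) ω)) := by
      funext ω
      simp only [Pi.add_apply]
      rw [hDsucc ω, hWsucc ω]
      ring
    -- integrabilities
    have hInt1 : Integrable (fun ω => (DDens l ε r ω * (auxK A B g l t T (r + 1)
          + ∑ u ∈ Finset.Icc 1 r, auxC B g t T u ⬝ᵥ ε u ω))
        * rexp (l (r + 1) ⬝ᵥ ε (r + 1) ω - 1 / 2 * (l (r + 1) ⬝ᵥ l (r + 1)))) μ := by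
      have heq : (fun ω => (DDens l ε r ω * (auxK A B g l t T (r + 1)
            + ∑ u ∈ Finset.Icc 1 r, auxC B g t T u ⬝ᵥ ε u ω))
          * rexp (l (r + 1) ⬝ᵥ ε (r + 1) ω - 1 / 2 * (l (r + 1) ⬝ᵥ l (r + 1))))
          = fun ω => DDens l ε (r + 1) ω * (auxK A B g l t T (r + 1)
            + ∑ u ∈ Finset.Icc 1 r, auxC B g t T u ⬝ᵥ ε u ω) := by
        funext ω
        rw [hDsucc ω]
        ring
      rw [heq]
      exact aux_int_D_lin hmeas hindep hindep' hgauss (r + 1) r (by omega) _ _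
    have hexpE : (fun ω => rexp (l (r + 1) ⬝ᵥ ε (r + 1) ω
          - 1 / 2 * (l (r + 1) ⬝ᵥ l (r + 1))))
        = fun ω => rexp (-(1 / 2) * (l (r + 1) ⬝ᵥ l (r + 1)))
            * rexp (l (r + 1) ⬝ᵥ ε (r + 1) ω) := by
      funext ω
      rw [← Real.exp_add]
      congr 1
      ring
    have hIntE : Integrable (fun ω => rexp (l (r + 1) ⬝ᵥ ε (r + 1) ω
        - 1 / 2 * (l (r + 1) ⬝ᵥ l (r + 1)))) μ := by
      rw [hexpE]
      exact ((aux_vec_exp hmeas hindep' hgauss (r + 1) (l (r + 1))).1).const_mul _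
    have hexpw : ∀ ω : Ω, rexp (l (r + 1) ⬝ᵥ ε (r + 1) ω
          - 1 / 2 * (l (r + 1) ⬝ᵥ l (r + 1)))
        = rexp (-(1 / 2) * (l (r + 1) ⬝ᵥ l (r + 1)))
            * rexp (l (r + 1) ⬝ᵥ ε (r + 1) ω) := by
      intro ω
      rw [← Real.exp_add]
      congr 1
      ring
    have hIntEC : Integrable (fun ω => rexp (l (r + 1) ⬝ᵥ ε (r + 1) ω
          - 1 / 2 * (l (r + 1) ⬝ᵥ l (r + 1)))
        * (auxC B g t T (r + 1) ⬝ᵥ ε (r + 1) ω)) μ := by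
      have heq : (fun ω => rexp (l (r + 1) ⬝ᵥ ε (r + 1) ω
            - 1 / 2 * (l (r + 1) ⬝ᵥ l (r + 1)))
          * (auxC B g t T (r + 1) ⬝ᵥ ε (r + 1) ω))
          = fun ω => rexp (-(1 / 2) * (l (r + 1) ⬝ᵥ l (r + 1)))
            * (rexp (l (r + 1) ⬝ᵥ ε (r + 1) ω)
                * (auxC B g t T (r + 1) ⬝ᵥ ε (r + 1) ω)) := by
        funext ω
        rw [hexpw ω]
        ring
      rw [heq]
      exact ((aux_vec_expmul hmeas hindep' hgauss (r + 1) (l (r + 1))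
        (auxC B g t T (r + 1))).1).const_mul _
    have hr1mem : r + 1 ∈ Finset.Icc 1 (r + 1) := by
      simp only [Finset.mem_Icc]
      omega
    have hInt2 : Integrable (fun ω => DDens l ε r ω
        * (rexp (l (r + 1) ⬝ᵥ ε (r + 1) ω - 1 / 2 * (l (r + 1) ⬝ᵥ l (r + 1)))
            * (auxC B g t T (r + 1) ⬝ᵥ ε (r + 1) ω))) μ := by
      have heq : (fun ω => DDens l ε r ω
          * (rexp (l (r + 1) ⬝ᵥ ε (r + 1) ω - 1 / 2 * (l (r + 1) ⬝ᵥ l (r + 1)))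
              * (auxC B g t T (r + 1) ⬝ᵥ ε (r + 1) ω)))
          = fun ω => (∏ u ∈ Finset.Icc 1 (r + 1), rexp (-(1 / 2) * (l u ⬝ᵥ l u)))
            * ((∏ u ∈ Finset.Icc 1 (r + 1), rexp (l u ⬝ᵥ ε u ω))
                * (auxC B g t T (r + 1) ⬝ᵥ ε (r + 1) ω)) := by
        funext ω
        have h1 : DDens l ε r ω
            * rexp (l (r + 1) ⬝ᵥ ε (r + 1) ω - 1 / 2 * (l (r + 1) ⬝ᵥ l (r + 1)))
            = DDens l ε (r + 1) ω := (hDsucc ω).symm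
        calc DDens l ε r ω
            * (rexp (l (r + 1) ⬝ᵥ ε (r + 1) ω - 1 / 2 * (l (r + 1) ⬝ᵥ l (r + 1)))
                * (auxC B g t T (r + 1) ⬝ᵥ ε (r + 1) ω))
            = (DDens l ε r ω
                * rexp (l (r + 1) ⬝ᵥ ε (r + 1) ω - 1 / 2 * (l (r + 1) ⬝ᵥ l (r + 1))))
              * (auxC B g t T (r + 1) ⬝ᵥ ε (r + 1) ω) := by ring
          _ = DDens l ε (r + 1) ω * (auxC B g t T (r + 1) ⬝ᵥ ε (r + 1) ω) := by rw [h1]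
          _ = _ := by rw [aux_Dfact l (r + 1) ω]; ring
      rw [heq]
      exact ((aux_master hmeas hindep hindep' hgauss (Finset.Icc 1 (r + 1)) l (r + 1)
        (auxC B g t T (r + 1)) hr1mem).1).const_mul _
    -- tower + induction hypothesis
    have h0 : μ[(fun ω => DDens l ε T ω * auxW A B g l ε t T T ω) | gaussFilt ε r]
        =ᵐ[μ] μ[(fun ω => DDens l ε (r + 1) ω * auxW A B g l ε t T (r + 1) ω)
            | gaussFilt ε r] :=
      (condExp_condExp_of_le (aux_filt_mono (Nat.le_succ r)) hle1).symm.trans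
        (condExp_congr_ae hIH)
    have h1 : μ[(fun ω => DDens l ε (r + 1) ω * auxW A B g l ε t T (r + 1) ω)
          | gaussFilt ε r]
        =ᵐ[μ] μ[(fun ω => (DDens l ε r ω * (auxK A B g l t T (r + 1)
              + ∑ u ∈ Finset.Icc 1 r, auxC B g t T u ⬝ᵥ ε u ω))
            * rexp (l (r + 1) ⬝ᵥ ε (r + 1) ω - 1 / 2 * (l (r + 1) ⬝ᵥ l (r + 1))))
            | gaussFilt ε r]
          + μ[(fun ω => DDens l ε r ω
              * (rexp (l (r + 1) ⬝ᵥ ε (r + 1) ω - 1 / 2 * (l (r + 1) ⬝ᵥ l (r + 1)))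
                  * (auxC B g t T (r + 1) ⬝ᵥ ε (r + 1) ω))) | gaussFilt ε r] := by
      rw [hsplit]
      exact condExp_add hInt1 hInt2 _
    have h2 := aux_condexp_factor hindep hmeas (Nat.lt_succ_self r)
      (fun ω => DDens l ε r ω * (auxK A B g l t T (r + 1)
        + ∑ u ∈ Finset.Icc 1 r, auxC B g t T u ⬝ᵥ ε u ω))
      ((aux_sm_D l r).mul (aux_sm_lin r _ _))
      (fun x => rexp (l (r + 1) ⬝ᵥ x - 1 / 2 * (l (r + 1) ⬝ᵥ l (r + 1))))
      (Real.measurable_exp.comp ((aux_meas_dot (l (r + 1))).sub measurable_const))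
      hInt1 hIntE
    have hEval : ∫ x, rexp (l (r + 1) ⬝ᵥ ε (r + 1) x
        - 1 / 2 * (l (r + 1) ⬝ᵥ l (r + 1))) ∂μ = 1 := by
      simp only [hexpw]
      rw [integral_const_mul, (aux_vec_exp hmeas hindep' hgauss (r + 1) (l (r + 1))).2,
        ← Real.exp_add,
        show -(1 / 2) * (l (r + 1) ⬝ᵥ l (r + 1)) + (l (r + 1) ⬝ᵥ l (r + 1)) / 2 = 0 by ring,
        Real.exp_zero]
    have h3 := aux_condexp_factor hindep hmeas (Nat.lt_succ_self r)
      (DDens l ε r) (aux_sm_D l r)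
      (fun x => rexp (l (r + 1) ⬝ᵥ x - 1 / 2 * (l (r + 1) ⬝ᵥ l (r + 1)))
        * (auxC B g t T (r + 1) ⬝ᵥ x))
      ((Real.measurable_exp.comp ((aux_meas_dot (l (r + 1))).sub measurable_const)).mul
        (aux_meas_dot _))
      hInt2 hIntEC
    have hECval : ∫ x, rexp (l (r + 1) ⬝ᵥ ε (r + 1) x
          - 1 / 2 * (l (r + 1) ⬝ᵥ l (r + 1)))
        * (auxC B g t T (r + 1) ⬝ᵥ ε (r + 1) x) ∂μ
        = auxC B g t T (r + 1) ⬝ᵥ l (r + 1) := by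
      simp only [hexpw]
      simp_rw [mul_assoc]
      rw [integral_const_mul, (aux_vec_expmul hmeas hindep' hgauss (r + 1) (l (r + 1))
        (auxC B g t T (r + 1))).2, ← mul_assoc, ← Real.exp_add,
        show -(1 / 2) * (l (r + 1) ⬝ᵥ l (r + 1)) + (l (r + 1) ⬝ᵥ l (r + 1)) / 2 = 0 by ring,
        Real.exp_zero, one_mul]
    rw [hEval] at h2
    rw [hECval] at h3
    refine h0.trans (h1.trans ?_)
    filter_upwards [h2, h3] with ω hw2 hw3
    simp only [Pi.add_apply]
    rw [hw2, hw3, mul_one, auxW, hKr]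
    ring
end Main
section Fin2
variable {n : ℕ}

lemma aux_dot_sum {ι : Type*} (c : Fin n → ℝ) (s : Finset ι) (w : ι → Fin n → ℝ) :
    c ⬝ᵥ (∑ u ∈ s, w u) = ∑ u ∈ s, c ⬝ᵥ w u := by
  simp only [dotProduct, Finset.sum_apply, Finset.mul_sum]
  exact Finset.sum_comm

lemma aux_sum_dot {ι : Type*} (c : Fin n → ℝ) (s : Finset ι) (w : ι → Fin n → ℝ) :
    (∑ u ∈ s, w u) ⬝ᵥ c = ∑ u ∈ s, w u ⬝ᵥ c := by
  simp only [dotProduct, Finset.sum_apply, Finset.sum_mul]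
  exact Finset.sum_comm

lemma aux_swap {M : Type*} [AddCommMonoid M] (t T : ℕ) (F : ℕ → ℕ → M) :
    ∑ s ∈ Finset.Icc (t + 1) T, ∑ u ∈ Finset.Icc 1 s, F s u
      = ∑ u ∈ Finset.Icc 1 T, ∑ s ∈ Finset.Icc (max (t + 1) u) T, F s u := by
  have h1 : ∀ s ∈ Finset.Icc (t + 1) T,
      ∑ u ∈ Finset.Icc 1 s, F s u
        = ∑ u ∈ Finset.Icc 1 T, if u ≤ s then F s u else 0 := by
    intro s hs
    rw [Finset.mem_Icc] at hs
    rw [← Finset.sum_filter]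
    congr 1
    ext x
    simp only [Finset.mem_Icc, Finset.mem_filter]
    omega
  rw [Finset.sum_congr rfl h1, Finset.sum_comm]
  refine Finset.sum_congr rfl fun u hu => ?_
  rw [← Finset.sum_filter]
  congr 1
  ext x
  simp only [Finset.mem_Icc, Finset.mem_filter]
  omega
end Fin2

section Zeq
variable {Ω : Type*} {n : ℕ}

lemma aux_Z_eq_W (A : ℕ → Fin n → ℝ) (B : ℕ → ℕ → Matrix (Fin n) (Fin n) ℝ)
    (g l : ℕ → Fin n → ℝ) (ε : ℕ → Ω → Fin n → ℝ) (t T : ℕ) (ω : Ω) :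
    (∑ s ∈ Finset.Icc (t + 1) T, g s ⬝ᵥ GProc A B ε s ω)
      = auxW A B g l ε t T T ω := by
  have hG : ∀ s, GProc A B ε s ω = A s + ∑ u ∈ Finset.Icc 1 s, (B s u).mulVec (ε u ω) := by
    intro s
    funext i
    simp [GProc, Finset.sum_apply]
  have h1 : ∀ s, g s ⬝ᵥ GProc A B ε s ω
      = g s ⬝ᵥ A s + ∑ u ∈ Finset.Icc 1 s, g s ⬝ᵥ (B s u).mulVec (ε u ω) := by
    intro s
    rw [hG s, dotProduct_add, aux_dot_sum]
  rw [Finset.sum_congr rfl fun s _ => h1 s, Finset.sum_add_distrib,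
    aux_swap t T (fun s u => g s ⬝ᵥ (B s u).mulVec (ε u ω))]
  rw [auxW, auxK]
  have h2 : ∑ u ∈ Finset.Icc (T + 1) T, auxC B g t T u ⬝ᵥ l u = 0 := by
    rw [Finset.Icc_eq_empty (by omega), Finset.sum_empty]
  rw [h2, add_zero]
  congr 1
  refine Finset.sum_congr rfl fun u _ => ?_
  rw [auxC, aux_sum_dot]
  exact Finset.sum_congr rfl fun s _ => dotProduct_mulVec (g s) (B s u) (ε u ω)
end Zeq

section Lin
variable {Ω : Type*} {m0 : MeasurableSpace Ω} {μ : Measure Ω} [IsProbabilityMeasure μ]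
  {n : ℕ} {ε : ℕ → Ω → Fin n → ℝ}

lemma aux_int_lin (hmeas : ∀ t, Measurable (ε t))
    (hindep' : ∀ t, iIndepFun (m := fun _ => (inferInstance : MeasurableSpace ℝ))
      (fun i ω => ε t ω i) μ)
    (hgauss : ∀ t i, Measure.map (fun ω => ε t ω i) μ = gaussianReal 0 1)
    (u : ℕ) (c : Fin n → ℝ) :
    Integrable (fun ω => c ⬝ᵥ ε u ω) μ ∧ ∫ ω, c ⬝ᵥ ε u ω ∂μ = 0 := by
  have h := aux_vec_expmul hmeas hindep' hgauss u (0 : Fin n → ℝ) c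
  have heq : (fun ω => rexp ((0 : Fin n → ℝ) ⬝ᵥ ε u ω) * (c ⬝ᵥ ε u ω))
      = fun ω => c ⬝ᵥ ε u ω := by
    funext ω
    rw [zero_dotProduct, Real.exp_zero, one_mul]
  rw [heq] at h
  refine ⟨h.1, ?_⟩
  rw [h.2]; simp
end Lin

lemma aux_K_succ {n : ℕ} (A : ℕ → Fin n → ℝ) (B : ℕ → ℕ → Matrix (Fin n) (Fin n) ℝ)
    (g l : ℕ → Fin n → ℝ) (t T r : ℕ) (hrT : r + 1 ≤ T) :
    auxK A B g l t T r = auxK A B g l t T (r + 1) + auxC B g t T (r + 1) ⬝ᵥ l (r + 1) := by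
  rw [auxK, auxK, add_assoc]
  congr 1
  have hins : Finset.Icc (r + 1) T = insert (r + 1) (Finset.Icc (r + 2) T) := by
    ext x
    simp only [Finset.mem_Icc, Finset.mem_insert]
    omega
  rw [hins, Finset.sum_insert (by simp only [Finset.mem_Icc]; omega), add_comm]

/-- In the Gaussian model, with `X_s := g_s^T G_s`,
`E^P_t[E^Q_{t+1}[Σ_{s=t+1}^T X_s]] = E^Q_t[Σ_{s=t+1}^T X_s] - Σ_{s=t+1}^T g_s^T B_{s,t+1} λ_{t+1}`,
where `E^Q_r[Z] := D_r⁻¹ E^P_r[D_T Z]` for `G_T`-measurable `Z`. -/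
theorem stmt_15 {Ω : Type*} {m0 : MeasurableSpace Ω} (μ : Measure Ω) [IsProbabilityMeasure μ]
    (n T : ℕ) (ε : ℕ → Ω → Fin n → ℝ) (hmeas : ∀ t, Measurable (ε t))
    (hindep : iIndepFun (m := fun _ => (inferInstance : MeasurableSpace (Fin n → ℝ))) ε μ)
    (hindep' : ∀ t, iIndepFun (m := fun _ => (inferInstance : MeasurableSpace ℝ))
      (fun i ω => ε t ω i) μ)
    (hgauss : ∀ t i, Measure.map (fun ω => ε t ω i) μ = gaussianReal 0 1)
    (A : ℕ → Fin n → ℝ) (B : ℕ → ℕ → Matrix (Fin n) (Fin n) ℝ)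
    (hdet : ∀ t, (B t t).det ≠ 0)
    (l : ℕ → Fin n → ℝ) (g : ℕ → Fin n → ℝ)
    (t : ℕ) (ht : t < T) :
    μ[fun ω => (DDens l ε (t + 1) ω)⁻¹ *
        (μ[fun x => DDens l ε T x *
            (∑ s ∈ Finset.Icc (t + 1) T, (g s) ⬝ᵥ (GProc A B ε s x)) | gaussFilt ε (t + 1)]) ω
      | gaussFilt ε t]
      =ᵐ[μ]
    fun ω => (DDens l ε t ω)⁻¹ *
        (μ[fun x => DDens l ε T x *
            (∑ s ∈ Finset.Icc (t + 1) T, (g s) ⬝ᵥ (GProc A B ε s x)) | gaussFilt ε t]) ω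
      - ∑ s ∈ Finset.Icc (t + 1) T, (g s) ⬝ᵥ ((B s (t + 1)).mulVec (l (t + 1))) := by
  classical
  have hle := aux_filt_le hmeas t
  haveI : SigmaFinite (μ.trim hle) := by
    haveI : IsFiniteMeasure (μ.trim hle) := isFiniteMeasure_trim hle
    infer_instance
  have hDne : ∀ (m : ℕ) (ω : Ω), DDens l ε m ω ≠ 0 := fun m ω => Real.exp_ne_zero _
  have hfeq : (fun x => DDens l ε T x
        * (∑ s ∈ Finset.Icc (t + 1) T, g s ⬝ᵥ GProc A B ε s x))
      = fun x => DDens l ε T x * auxW A B g l ε t T T x := by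
    funext x
    rw [aux_Z_eq_W A B g l ε t T x]
  rw [hfeq]
  have hA1 := aux_lemA (l := l) hmeas hindep hindep' hgauss A B g t T
    (T - (t + 1)) (t + 1) (by omega)
  have hA0 := aux_lemA (l := l) hmeas hindep hindep' hgauss A B g t T
    (T - t) t (by omega)
  have hinner : (fun ω => (DDens l ε (t + 1) ω)⁻¹
        * (μ[fun x => DDens l ε T x * auxW A B g l ε t T T x | gaussFilt ε (t + 1)]) ω)
      =ᵐ[μ] fun ω => auxW A B g l ε t T (t + 1) ω := by
    filter_upwards [hA1] with ω hω
    rw [hω, ← mul_assoc, inv_mul_cancel₀ (hDne (t + 1) ω), one_mul]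
  have hWs : (fun ω => auxW A B g l ε t T (t + 1) ω)
      = (fun ω => auxK A B g l t T (t + 1)
          + ∑ u ∈ Finset.Icc 1 t, auxC B g t T u ⬝ᵥ ε u ω)
        + fun ω => auxC B g t T (t + 1) ⬝ᵥ ε (t + 1) ω := by
    funext ω
    simp only [Pi.add_apply]
    rw [auxW, Finset.sum_Icc_succ_top (by omega : 1 ≤ t + 1), add_assoc]
  have hIntψ : Integrable (fun ω => auxK A B g l t T (t + 1)
      + ∑ u ∈ Finset.Icc 1 t, auxC B g t T u ⬝ᵥ ε u ω) μ :=
    (integrable_const _).add (integrable_finset_sum _ fun u _ =>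
      (aux_int_lin hmeas hindep' hgauss u _).1)
  have hIntc := aux_int_lin hmeas hindep' hgauss (t + 1) (auxC B g t T (t + 1))
  have hsm_c : StronglyMeasurable[MeasurableSpace.comap (ε (t + 1)) inferInstance]
      (fun ω => auxC B g t T (t + 1) ⬝ᵥ ε (t + 1) ω) :=
    ((aux_meas_dot _).comp (Measurable.of_comap_le le_rfl)).stronglyMeasurable
  have hc0 : μ[(fun ω => auxC B g t T (t + 1) ⬝ᵥ ε (t + 1) ω) | gaussFilt ε t]
      =ᵐ[μ] fun _ => (0 : ℝ) := by
    have h := condExp_indep_eq (hmeas (t + 1)).comap_le hle hsm_c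
      (aux_indep_filt hindep hmeas (Nat.lt_succ_self t))
    rw [hIntc.2] at h
    exact h
  have hψeq : μ[(fun ω => auxK A B g l t T (t + 1)
        + ∑ u ∈ Finset.Icc 1 t, auxC B g t T u ⬝ᵥ ε u ω) | gaussFilt ε t]
      = fun ω => auxK A B g l t T (t + 1)
        + ∑ u ∈ Finset.Icc 1 t, auxC B g t T u ⬝ᵥ ε u ω :=
    condExp_of_stronglyMeasurable hle (aux_sm_lin t _ _) hIntψ
  have hLHS : μ[(fun ω => (DDens l ε (t + 1) ω)⁻¹
        * (μ[fun x => DDens l ε T x * auxW A B g l ε t T T x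
            | gaussFilt ε (t + 1)]) ω) | gaussFilt ε t]
      =ᵐ[μ] fun ω => auxK A B g l t T (t + 1)
        + ∑ u ∈ Finset.Icc 1 t, auxC B g t T u ⬝ᵥ ε u ω := by
    refine (condExp_congr_ae hinner).trans ?_
    have h1 : μ[(fun ω => auxW A B g l ε t T (t + 1) ω) | gaussFilt ε t]
        =ᵐ[μ] μ[(fun ω => auxK A B g l t T (t + 1)
              + ∑ u ∈ Finset.Icc 1 t, auxC B g t T u ⬝ᵥ ε u ω) | gaussFilt ε t]
          + μ[(fun ω => auxC B g t T (t + 1) ⬝ᵥ ε (t + 1) ω) | gaussFilt ε t] := by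
      rw [hWs]
      exact condExp_add hIntψ hIntc.1 _
    refine h1.trans ?_
    filter_upwards [hc0] with ω h0
    simp only [Pi.add_apply]
    rw [hψeq, h0, add_zero]
  refine hLHS.trans ?_
  have hCc : auxC B g t T (t + 1) ⬝ᵥ l (t + 1)
      = ∑ s ∈ Finset.Icc (t + 1) T, g s ⬝ᵥ (B s (t + 1)).mulVec (l (t + 1)) := by
    rw [auxC, Nat.max_self, aux_sum_dot]
    exact Finset.sum_congr rfl fun s _ => (dotProduct_mulVec (g s) (B s (t + 1)) (l (t + 1))).symm
  filter_upwards [hA0] with ω h0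
  rw [h0, ← mul_assoc, inv_mul_cancel₀ (hDne t ω), one_mul, auxW,
    aux_K_succ A B g l t T t (by omega), hCc]
  ring
end
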